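/- arXiv:1012.2133 — 9 statements merged into one kernel-verified Lean document; each statement's English description precedes it below -/
import Mathlib

section
/- Let C be a d-variate copula satisfying Conditions 1 and 2 with constant K. Then for every j ∈ {1,…,d} and all u, v ∈ [0,1]^d with 0 < u_j < 1 and 0 < v_j < 1, |Ċ_j(v) − Ċ_j(u)| ≤ K · max( 1/(u_j(1−u_j)), 1/(v_j(1−v_j)) ) · ‖v − u‖₁, where ‖x‖₁ = ∑_{i=1}^d |x_i|. -/
open MeasureTheory Filter Set
open scoped ENNReal Topology

lemma mvt_abs (f f' : ℝ → ℝ) (a b M : ℝ) (hab : a ≤ b)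
    (hc : ContinuousOn f (Icc a b)) (hd : ∀ t ∈ Ioo a b, HasDerivAt f (f' t) t)
    (hb : ∀ t ∈ Ioo a b, |f' t| ≤ M) : |f b - f a| ≤ M * (b - a) := by
  rcases eq_or_lt_of_le hab with rfl | hlt
  · simp
  · obtain ⟨c, hcmem, hslope⟩ := exists_hasDerivAt_eq_slope f f' hlt hc hd
    have hba : b - a > 0 := sub_pos.2 hlt
    have : f b - f a = f' c * (b - a) := by
      rw [hslope]; field_simp
    rw [this, abs_mul, abs_of_pos hba]
    exact mul_le_mul_of_nonneg_right (hb c hcmem) hba.le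

lemma quad_inv_le (a b t : ℝ) (ha0 : 0 < a) (ha1 : a < 1) (hb0 : 0 < b) (hb1 : b < 1)
    (h1 : min a b ≤ t) (h2 : t ≤ max a b) :
    (t * (1 - t))⁻¹ ≤ max ((a * (1 - a))⁻¹) ((b * (1 - b))⁻¹) := by
  have ht0 : 0 < t := lt_of_lt_of_le (lt_min ha0 hb0) h1
  have ht1 : t < 1 := lt_of_le_of_lt h2 (max_lt ha1 hb1)
  have htpos : 0 < t * (1 - t) := mul_pos ht0 (by linarith)
  have hmin : min (a * (1 - a)) (b * (1 - b)) ≤ t * (1 - t) := by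
    rcases le_total a b with h | h
    · rw [min_eq_left h] at h1; rw [max_eq_right h] at h2
      rcases le_total (a * (1 - a)) (b * (1 - b)) with hh | hh
      · rw [min_eq_left hh]; nlinarith [mul_nonneg (sub_nonneg.2 h1) (sub_nonneg.2 h2), sq_nonneg (a + t - 1), sq_nonneg (b + t - 1), sq_nonneg (a - t), sq_nonneg (b - t), sq_nonneg (a + b - 1)]
      · rw [min_eq_right hh]; nlinarith [mul_nonneg (sub_nonneg.2 h1) (sub_nonneg.2 h2), sq_nonneg (a + t - 1), sq_nonneg (b + t - 1), sq_nonneg (a - t), sq_nonneg (b - t), sq_nonneg (a + b - 1)]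
    · rw [min_eq_right h] at h1; rw [max_eq_left h] at h2
      rcases le_total (a * (1 - a)) (b * (1 - b)) with hh | hh
      · rw [min_eq_left hh]; nlinarith [mul_nonneg (sub_nonneg.2 h1) (sub_nonneg.2 h2), sq_nonneg (a + t - 1), sq_nonneg (b + t - 1), sq_nonneg (a - t), sq_nonneg (b - t), sq_nonneg (a + b - 1)]
      · rw [min_eq_right hh]; nlinarith [mul_nonneg (sub_nonneg.2 h1) (sub_nonneg.2 h2), sq_nonneg (a + t - 1), sq_nonneg (b + t - 1), sq_nonneg (a - t), sq_nonneg (b - t), sq_nonneg (a + b - 1)]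
  rcases le_total (a * (1 - a)) (b * (1 - b)) with hh | hh
  · rw [min_eq_left hh] at hmin
    exact le_trans (inv_anti₀ (mul_pos ha0 (by linarith)) hmin) (le_max_left _ _)
  · rw [min_eq_right hh] at hmin
    exact le_trans (inv_anti₀ (mul_pos hb0 (by linarith)) hmin) (le_max_right _ _)

lemma sum_ite_zero_eq {d : ℕ} (j : Fin d) (f : Fin d → ℝ) :
    (∑ i : Fin d, if i = j then (0:ℝ) else f i) = (∑ i, f i) - f j := by
  have h2 : (∑ i : Fin d, if i = j then f i else 0) = f j := by
    simp [Finset.sum_ite_eq']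
  rw [eq_sub_iff_add_eq, ← h2, ← Finset.sum_add_distrib]
  apply Finset.sum_congr rfl
  intro i _
  split <;> simp


/-- **Lemma 1 (Segers).** Under Conditions 1 and 2 with constant `K`, for every `j` and all
`u, v ∈ [0,1]^d` with `0 < u_j < 1` and `0 < v_j < 1`,
`|Ċ_j(v) − Ċ_j(u)| ≤ K · max(1/(u_j(1−u_j)), 1/(v_j(1−v_j))) · ‖v − u‖₁`. -/
theorem copula_partial_deriv_increment_bound
    (d : ℕ) (hd : 1 ≤ d)
    -- the copula, as the c.d.f. of a probability measure on [0,1]^d with uniform margins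
    (μ : Measure (Fin d → ℝ)) [IsProbabilityMeasure μ]
    (hmarg : ∀ j : Fin d, ∀ t ∈ Icc (0 : ℝ) 1, μ {w | w j ≤ t} = ENNReal.ofReal t)
    (C : (Fin d → ℝ) → ℝ)
    (hC : ∀ u ∈ Icc (0 : Fin d → ℝ) 1, C u = (μ {w | ∀ j, w j ≤ u j}).toReal)
    -- Condition 1: the partial derivatives exist and are continuous on V_{d,j}
    (Cdot : Fin d → (Fin d → ℝ) → ℝ)
    (hderiv : ∀ (j : Fin d) (u : Fin d → ℝ), u ∈ Icc 0 1 → 0 < u j → u j < 1 →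
      HasDerivAt (fun t => C (Function.update u j t)) (Cdot j u) (u j))
    (hcont : ∀ j : Fin d,
      ContinuousOn (Cdot j) {u : Fin d → ℝ | u ∈ Icc 0 1 ∧ 0 < u j ∧ u j < 1})
    -- the extension of Ċ_j to the boundary faces u_j = 0 and u_j = 1
    (hext0 : ∀ (j : Fin d) (u : Fin d → ℝ), u ∈ Icc 0 1 → u j = 0 →
      Cdot j u = limsup (fun h : ℝ => C (Function.update u j h) / h) (𝓝[>] 0))
    (hext1 : ∀ (j : Fin d) (u : Fin d → ℝ), u ∈ Icc 0 1 → u j = 1 →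
      Cdot j u = limsup (fun h : ℝ => (C u - C (Function.update u j (u j - h))) / h) (𝓝[>] 0))
    -- Condition 2: second-order partial derivatives C̈_{ij} = ∂Ċ_j/∂u_i, continuous on
    -- V_{d,i} ∩ V_{d,j} and bounded by K·min(1/(u_i(1-u_i)), 1/(u_j(1-u_j)))
    (K : ℝ) (hK : 0 < K)
    (Cddot : Fin d → Fin d → (Fin d → ℝ) → ℝ)
    (hderiv2 : ∀ (i j : Fin d) (u : Fin d → ℝ), u ∈ Icc 0 1 →
      0 < u i → u i < 1 → 0 < u j → u j < 1 →
      HasDerivAt (fun t => Cdot j (Function.update u i t)) (Cddot i j u) (u i))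
    (hcont2 : ∀ i j : Fin d, ContinuousOn (Cddot i j)
      {u : Fin d → ℝ | u ∈ Icc 0 1 ∧ (0 < u i ∧ u i < 1) ∧ (0 < u j ∧ u j < 1)})
    (hbound2 : ∀ (i j : Fin d) (u : Fin d → ℝ), u ∈ Icc 0 1 →
      0 < u i → u i < 1 → 0 < u j → u j < 1 →
      |Cddot i j u| ≤ K * min ((u i * (1 - u i))⁻¹) ((u j * (1 - u j))⁻¹)) :
    ∀ (j : Fin d) (u v : Fin d → ℝ), u ∈ Icc 0 1 → v ∈ Icc 0 1 →
      0 < u j → u j < 1 → 0 < v j → v j < 1 →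
      |Cdot j v - Cdot j u| ≤
        K * max ((u j * (1 - u j))⁻¹) ((v j * (1 - v j))⁻¹) * ∑ i, |v i - u i| := by
  intro j u v hu hv huj0 huj1 hvj0 hvj1
  set M : ℝ := max ((u j * (1 - u j))⁻¹) ((v j * (1 - v j))⁻¹) with hM
  have hMpos : 0 < M :=
    lt_max_of_lt_left (inv_pos.2 (mul_pos huj0 (by linarith)))
  have hKM : 0 ≤ K * M := le_of_lt (mul_pos hK hMpos)
  -- membership helper
  have upd_mem : ∀ (z : Fin d → ℝ) (i : Fin d) (t : ℝ), z ∈ Icc 0 1 → t ∈ Icc (0:ℝ) 1 →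
      Function.update z i t ∈ Icc (0 : Fin d → ℝ) 1 := by
    intro z i t hz ht
    constructor <;> intro l <;> rcases eq_or_ne l i with rfl | hne
    · simpa using ht.1
    · simpa [Function.update_of_ne hne] using hz.1 l
    · simpa using ht.2
    · simpa [Function.update_of_ne hne] using hz.2 l
  -- the key single-coordinate estimate
  have key : ∀ (i : Fin d) (z : Fin d → ℝ) (a b M' : ℝ), z ∈ Icc 0 1 → 0 ≤ a → b ≤ 1 → a ≤ b →
      (∀ t ∈ Icc a b, 0 < Function.update z i t j ∧ Function.update z i t j < 1) →
      (∀ t ∈ Ioo a b, |Cddot i j (Function.update z i t)| ≤ M') →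
      |Cdot j (Function.update z i b) - Cdot j (Function.update z i a)| ≤ M' * (b - a) := by
    intro i z a b M' hz ha0 hb1 hab hIcc hbd
    apply mvt_abs (fun t => Cdot j (Function.update z i t))
      (fun t => Cddot i j (Function.update z i t)) a b M' hab
    · apply ContinuousOn.comp (hcont j)
        (Continuous.continuousOn (continuous_const.update i continuous_id))
      intro t ht
      exact ⟨upd_mem z i t hz ⟨le_trans ha0 ht.1, le_trans ht.2 hb1⟩, hIcc t ht⟩
    · intro t ht
      have htIcc : t ∈ Icc a b := ⟨ht.1.le, ht.2.le⟩
      have ht0 : (0:ℝ) < t := lt_of_le_of_lt ha0 ht.1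
      have ht1 : t < 1 := lt_of_lt_of_le ht.2 hb1
      have hmem := upd_mem z i t hz ⟨ht0.le, ht1.le⟩
      have hj := hIcc t htIcc
      have := hderiv2 i j (Function.update z i t) hmem
        (by simpa using ht0) (by simpa using ht1) hj.1 hj.2
      simpa [Function.update_idem] using this
    · exact hbd
  -- orientation-free version
  have key' : ∀ (i : Fin d) (z : Fin d → ℝ) (a b M' : ℝ), z ∈ Icc 0 1 →
      a ∈ Icc (0:ℝ) 1 → b ∈ Icc (0:ℝ) 1 →
      (∀ t ∈ Icc (min a b) (max a b),
        0 < Function.update z i t j ∧ Function.update z i t j < 1) →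
      (∀ t ∈ Ioo (min a b) (max a b), |Cddot i j (Function.update z i t)| ≤ M') →
      |Cdot j (Function.update z i b) - Cdot j (Function.update z i a)| ≤ M' * |b - a| := by
    intro i z a b M' hz ha hb hIcc hbd
    rcases le_total a b with h | h
    · rw [min_eq_left h] at hIcc hbd; rw [max_eq_right h] at hIcc hbd
      rw [abs_of_nonneg (sub_nonneg.2 h)]
      exact key i z a b M' hz ha.1 hb.2 h hIcc hbd
    · rw [min_eq_right h] at hIcc hbd; rw [max_eq_left h] at hIcc hbd
      rw [abs_sub_comm (Cdot j (Function.update z i b)), abs_sub_comm b a,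
        abs_of_nonneg (sub_nonneg.2 h)]
      exact key i z b a M' hz hb.1 ha.2 h hIcc hbd
  -- step 1 : move coordinate j from u j to v j
  set w : Fin d → ℝ := Function.update u j (v j) with hw
  have hwmem : w ∈ Icc (0 : Fin d → ℝ) 1 := upd_mem u j (v j) hu ⟨hvj0.le, hvj1.le⟩
  have step1 : |Cdot j w - Cdot j u| ≤ K * M * |v j - u j| := by
    have := key' j u (u j) (v j) (K * M) hu ⟨huj0.le, huj1.le⟩ ⟨hvj0.le, hvj1.le⟩
      (fun t ht => by
        constructor
        · simp only [Function.update_self]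
          exact lt_of_lt_of_le (lt_min huj0 hvj0) ht.1
        · simp only [Function.update_self]
          exact lt_of_le_of_lt ht.2 (max_lt huj1 hvj1))
      (fun t ht => by
        have ht0 : 0 < t := lt_of_lt_of_le (lt_min huj0 hvj0) ht.1.le
        have ht1 : t < 1 := lt_of_le_of_lt ht.2.le (max_lt huj1 hvj1)
        have hmem := upd_mem u j t hu ⟨ht0.le, ht1.le⟩
        have hb := hbound2 j j (Function.update u j t) hmem
          (by simpa using ht0) (by simpa using ht1) (by simpa using ht0) (by simpa using ht1)
        simp only [Function.update_self, min_self] at hb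
        refine le_trans hb ?_
        exact mul_le_mul_of_nonneg_left
          (quad_inv_le (u j) (v j) t huj0 huj1 hvj0 hvj1 ht.1.le ht.2.le) hK.le)
    calc |Cdot j w - Cdot j u|
        = |Cdot j (Function.update u j (v j)) - Cdot j (Function.update u j (u j))| := by
          rw [Function.update_eq_self]
      _ ≤ K * M * |v j - u j| := this
  -- the telescoping path for the other coordinates
  set g : ℕ → Fin d → ℝ := fun k i => if (i : ℕ) < k then v i else w i with hg
  have hg0 : g 0 = w := by funext l; simp [hg]
  have hgd : g d = v := by funext l; simp [hg, l.isLt]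
  have hgmem : ∀ k, g k ∈ Icc (0 : Fin d → ℝ) 1 := by
    intro k
    constructor <;> intro l <;> by_cases h : (l : ℕ) < k
    · simpa [hg, h] using hv.1 l
    · simpa [hg, h] using hwmem.1 l
    · simpa [hg, h] using hv.2 l
    · simpa [hg, h] using hwmem.2 l
  have hgj : ∀ k, g k j = v j := by
    intro k
    by_cases h : (j : ℕ) < k
    · simp [hg, h]
    · simp [hg, h, hw]
  -- per-step bound
  have stepk : ∀ (k : ℕ) (hkd : k < d),
      |Cdot j (g (k + 1)) - Cdot j (g k)| ≤
        (if (⟨k, hkd⟩ : Fin d) = j then 0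
          else K * M * |v ⟨k, hkd⟩ - u ⟨k, hkd⟩|) := by
    intro k hkd
    set i : Fin d := ⟨k, hkd⟩ with hi
    rcases eq_or_ne i j with hij | hij
    · -- coordinate j is unchanged
      have : g (k + 1) = g k := by
        funext l
        rcases lt_trichotomy (l : ℕ) k with h | h | h
        · simp [hg, h, Nat.lt_succ_of_lt h]
        · have hlj : l = j := by rw [← hij]; exact Fin.ext h
          simp [hg, h, Nat.lt_succ_of_le h.le, hlj, hw]
        · have h1 : ¬ (l : ℕ) < k := by omega
          have h2 : ¬ (l : ℕ) < k + 1 := by omega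
          simp [hg, h1, h2]
      simp [this, hij]
    · -- coordinate i ≠ j moves from u i to v i
      have hup1 : g (k + 1) = Function.update (g k) i (v i) := by
        funext l
        rcases eq_or_ne l i with rfl | hne
        · simp [hg, Function.update_self, hi]
        · have hlk : (l : ℕ) ≠ k := fun h => hne (Fin.ext h)
          have : ((l : ℕ) < k + 1) ↔ ((l : ℕ) < k) := by omega
          simp [hg, Function.update_of_ne hne, this]
      have hup0 : g k = Function.update (g k) i (u i) := by
        have hgki : g k i = u i := by
          have h1 : ¬ (k : ℕ) < k := lt_irrefl k
          have : w i = u i := Function.update_of_ne hij _ _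
          simp [hg, hi, this]
          exact this
        rw [← hgki, Function.update_eq_self]
      have hbd : ∀ t ∈ Ioo (min (u i) (v i)) (max (u i) (v i)),
          |Cddot i j (Function.update (g k) i t)| ≤ K * M := by
        intro t ht
        have ht0 : 0 < t := lt_of_le_of_lt (le_min (hu.1 i) (hv.1 i)) ht.1
        have ht1 : t < 1 := lt_of_lt_of_le ht.2 (max_le (hu.2 i) (hv.2 i))
        have hmem := upd_mem (g k) i t (hgmem k) ⟨ht0.le, ht1.le⟩
        have hji : (Function.update (g k) i t) j = v j := by
          rw [Function.update_of_ne (Ne.symm hij), hgj k]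
        have hb := hbound2 i j (Function.update (g k) i t) hmem
          (by simpa using ht0) (by simpa using ht1)
          (by rw [hji]; exact hvj0) (by rw [hji]; exact hvj1)
        refine le_trans hb ?_
        rw [hji]
        refine mul_le_mul_of_nonneg_left (le_trans (min_le_right _ _) ?_) hK.le
        exact le_max_right _ _
      have hIcc : ∀ t ∈ Icc (min (u i) (v i)) (max (u i) (v i)),
          0 < Function.update (g k) i t j ∧ Function.update (g k) i t j < 1 := by
        intro t ht
        rw [Function.update_of_ne (Ne.symm hij), hgj k]
        exact ⟨hvj0, hvj1⟩
      have := key' i (g k) (u i) (v i) (K * M) (hgmem k)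
        ⟨hu.1 i, hu.2 i⟩ ⟨hv.1 i, hv.2 i⟩ hIcc hbd
      rw [← hup1, ← hup0] at this
      simpa [hij] using this
  -- telescoping
  have tel : Cdot j v - Cdot j w = ∑ k ∈ Finset.range d,
      (Cdot j (g (k + 1)) - Cdot j (g k)) := by
    rw [Finset.sum_range_sub (fun k => Cdot j (g k)), hg0, hgd]
  have step2 : |Cdot j v - Cdot j w| ≤
      ∑ i : Fin d, (if i = j then (0:ℝ) else K * M * |v i - u i|) := by
    rw [tel]
    refine le_trans (Finset.abs_sum_le_sum_abs _ _) ?_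
    rw [show (∑ i : Fin d, (if i = j then (0:ℝ) else K * M * |v i - u i|)) =
        ∑ k ∈ Finset.range d, (if h : k < d then
          (if (⟨k, h⟩ : Fin d) = j then (0:ℝ) else K * M * |v ⟨k, h⟩ - u ⟨k, h⟩|) else 0) from ?_]
    · refine Finset.sum_le_sum ?_
      intro k hk
      have hkd : k < d := Finset.mem_range.1 hk
      simpa [hkd] using stepk k hkd
    · rw [← Fin.sum_univ_eq_sum_range]
      apply Finset.sum_congr rfl
      intro i _
      simp [i.isLt]
  -- combine
  have habs : |Cdot j v - Cdot j u| ≤ |Cdot j v - Cdot j w| + |Cdot j w - Cdot j u| :=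
    abs_sub_le _ _ _
  have := sum_ite_zero_eq j (fun i => K * M * |v i - u i|)
  calc |Cdot j v - Cdot j u|
      ≤ |Cdot j v - Cdot j w| + |Cdot j w - Cdot j u| := habs
    _ ≤ (∑ i : Fin d, (if i = j then (0:ℝ) else K * M * |v i - u i|)) + K * M * |v j - u j| :=
        add_le_add step2 step1
    _ = ∑ i : Fin d, K * M * |v i - u i| := by rw [this]; ring
    _ = K * M * ∑ i, |v i - u i| := by rw [Finset.mul_sum]
end

section
/- Let C be a bivariate copula such that the lower tail dependence coefficient λ = lim_{u↓0} C(u,u)/u exists and is strictly positive. Then: (i) for every v ∈ (0,1], limsup_{h↓0} C(h,v)/h ≥ λ (in fact liminf_{h↓0} C(h,v)/h ≥ λ); (ii) for every u ∈ (0,1), the partial derivative Ċ_1(u,0) = lim_{h→0}(C(u+h,0) − C(u,0))/h exists and equals 0. Consequently, there is no function on [0,1]² that is continuous at (0,0) and agrees with the (extended) first partial derivative Ċ_1 of C wherever the latter is defined: Ċ_1 cannot be continuous at the point (0,0). -/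
open MeasureTheory Filter Set
open scoped ENNReal Topology

/-- **Example 1 (tail dependence).** If a bivariate copula `C` has a positive lower tail
dependence coefficient `λ = lim_{u↓0} C(u,u)/u > 0`, then `liminf_{h↓0} C(h,v)/h ≥ λ` (hence
also `limsup_{h↓0} C(h,v)/h ≥ λ`) for every `v ∈ (0,1]`, while `Ċ_1(u,0) = 0` for
`u ∈ (0,1)`; consequently `Ċ_1` cannot be continuous at `(0,0)`. -/
theorem tail_dependence_partial_deriv_discontinuous
    -- the copula, as the c.d.f. of a probability measure on [0,1]² with uniform margins
    (μ : Measure (ℝ × ℝ)) [IsProbabilityMeasure μ]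
    (hmarg1 : ∀ t ∈ Icc (0 : ℝ) 1, μ {p | p.1 ≤ t} = ENNReal.ofReal t)
    (hmarg2 : ∀ t ∈ Icc (0 : ℝ) 1, μ {p | p.2 ≤ t} = ENNReal.ofReal t)
    (C : ℝ → ℝ → ℝ)
    (hC : ∀ u ∈ Icc (0 : ℝ) 1, ∀ v ∈ Icc (0 : ℝ) 1,
      C u v = (μ {p | p.1 ≤ u ∧ p.2 ≤ v}).toReal)
    -- the lower tail dependence coefficient exists and is positive
    (lam : ℝ) (hlam : 0 < lam)
    (htail : Tendsto (fun u : ℝ => C u u / u) (𝓝[>] 0) (𝓝 lam)) :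
    -- (i)
    (∀ v ∈ Ioc (0 : ℝ) 1,
      lam ≤ liminf (fun h : ℝ => C h v / h) (𝓝[>] 0) ∧
      lam ≤ limsup (fun h : ℝ => C h v / h) (𝓝[>] 0)) ∧
    -- (ii)
    (∀ u ∈ Ioo (0 : ℝ) 1, HasDerivAt (fun x : ℝ => C x 0) 0 u) ∧
    -- consequently, no function agreeing with the (extended) partial derivative Ċ_1
    -- wherever the latter is defined can be continuous at (0,0)
    ¬ ∃ g : ℝ × ℝ → ℝ,
        (∀ u ∈ Ioo (0 : ℝ) 1, g (u, 0) = 0) ∧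
        (∀ v ∈ Ioc (0 : ℝ) 1, g (0, v) = limsup (fun h : ℝ => C h v / h) (𝓝[>] 0)) ∧
        ContinuousWithinAt g (Icc (0 : ℝ) 1 ×ˢ Icc (0 : ℝ) 1) (0, 0) := by
  -- C x 0 = 0 on [0,1]
  have hCzero : ∀ x ∈ Icc (0:ℝ) 1, C x 0 = 0 := by
    intro x hx
    rw [hC x hx 0 (by norm_num)]
    have h0 : μ {p : ℝ × ℝ | p.2 ≤ 0} = 0 := by simpa using hmarg2 0 (by norm_num)
    have hz : μ {p : ℝ × ℝ | p.1 ≤ x ∧ p.2 ≤ 0} = 0 :=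
      le_antisymm (le_trans (measure_mono fun p hp => hp.2) h0.le) zero_le
    simp [hz]
  -- bounds: for 0 < h ≤ 1 and v ∈ [0,1], 0 ≤ C h v / h ≤ 1
  have hbound : ∀ v ∈ Icc (0:ℝ) 1, ∀ h ∈ Ioc (0:ℝ) 1, 0 ≤ C h v / h ∧ C h v / h ≤ 1 := by
    intro v hv h hh
    have hh1 : h ∈ Icc (0:ℝ) 1 := ⟨hh.1.le, hh.2⟩
    rw [hC h hh1 v hv]
    constructor
    · exact div_nonneg ENNReal.toReal_nonneg hh.1.le
    · rw [div_le_one hh.1]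
      have hle : μ {p : ℝ × ℝ | p.1 ≤ h ∧ p.2 ≤ v} ≤ ENNReal.ofReal h := by
        rw [← hmarg1 h hh1]; exact measure_mono fun p hp => hp.1
      calc (μ {p : ℝ × ℝ | p.1 ≤ h ∧ p.2 ≤ v}).toReal
          ≤ (ENNReal.ofReal h).toReal := ENNReal.toReal_mono ENNReal.ofReal_ne_top hle
        _ = h := ENNReal.toReal_ofReal hh.1.le
  -- part (i)
  have part1 : ∀ v ∈ Ioc (0:ℝ) 1,
      lam ≤ liminf (fun h : ℝ => C h v / h) (𝓝[>] 0) ∧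
      lam ≤ limsup (fun h : ℝ => C h v / h) (𝓝[>] 0) := by
    intro v hv
    have hvI : v ∈ Icc (0:ℝ) 1 := ⟨hv.1.le, hv.2⟩
    have hmem : Ioo (0:ℝ) v ∈ 𝓝[>] (0:ℝ) :=
      Ioo_mem_nhdsGT_of_mem ⟨le_refl 0, hv.1⟩
    have hE2 : ∀ᶠ h in 𝓝[>] (0:ℝ), 0 ≤ C h v / h ∧ C h v / h ≤ 1 := by
      filter_upwards [hmem] with h hh
      exact hbound v hvI h ⟨hh.1, hh.2.le.trans hv.2⟩
    have hE1 : ∀ᶠ h in 𝓝[>] (0:ℝ), C h h / h ≤ C h v / h := by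
      filter_upwards [hmem] with h hh
      have hh1 : h ∈ Icc (0:ℝ) 1 := ⟨hh.1.le, hh.2.le.trans hv.2⟩
      rw [hC h hh1 h hh1, hC h hh1 v hvI]
      have hmono : (μ {p : ℝ × ℝ | p.1 ≤ h ∧ p.2 ≤ h}).toReal
          ≤ (μ {p : ℝ × ℝ | p.1 ≤ h ∧ p.2 ≤ v}).toReal :=
        ENNReal.toReal_mono (measure_ne_top μ _)
          (measure_mono fun p hp => ⟨hp.1, hp.2.trans hh.2.le⟩)
      exact div_le_div_of_nonneg_right hmono hh.1.le
    have hbd_le : IsBoundedUnder (· ≤ ·) (𝓝[>] (0:ℝ)) (fun h => C h v / h) :=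
      isBoundedUnder_of_eventually_le (hE2.mono fun h hh => hh.2)
    have hbd_ge : IsBoundedUnder (· ≥ ·) (𝓝[>] (0:ℝ)) (fun h => C h v / h) :=
      isBoundedUnder_of_eventually_ge (hE2.mono fun h hh => hh.1)
    have hf_cb : IsCoboundedUnder (· ≥ ·) (𝓝[>] (0:ℝ)) (fun h : ℝ => C h v / h) :=
      hbd_le.isCoboundedUnder_ge
    have hliminf : lam ≤ liminf (fun h : ℝ => C h v / h) (𝓝[>] 0) := by
      have := liminf_le_liminf hE1 htail.isBoundedUnder_ge hf_cb
      rwa [htail.liminf_eq] at this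
    exact ⟨hliminf, hliminf.trans (liminf_le_limsup hbd_le hbd_ge)⟩
  refine ⟨part1, ?_, ?_⟩
  · -- part (ii)
    intro u hu
    have heq : (fun x : ℝ => C x 0) =ᶠ[𝓝 u] fun _ => (0:ℝ) := by
      filter_upwards [Ioo_mem_nhds hu.1 hu.2] with x hx
      exact hCzero x ⟨hx.1.le, hx.2.le⟩
    exact (hasDerivAt_const u (0:ℝ)).congr_of_eventuallyEq heq
  · -- part (iii)
    rintro ⟨g, hg1, hg2, hg3⟩
    set S := Icc (0:ℝ) 1 ×ˢ Icc (0:ℝ) 1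
    have hseq : Tendsto (fun n : ℕ => (1:ℝ) / (n + 1)) atTop (𝓝 0) :=
      tendsto_one_div_add_atTop_nhds_zero_nat
    have hmemI : ∀ n : ℕ, (1:ℝ) / (n + 1) ∈ Ioc (0:ℝ) 1 := by
      intro n
      constructor
      · positivity
      · rw [div_le_one (by positivity)]
        exact le_add_of_nonneg_left (Nat.cast_nonneg n)
    have hIcc : ∀ n : ℕ, (1:ℝ) / (n + 1) ∈ Icc (0:ℝ) 1 :=
      fun n => ⟨(hmemI n).1.le, (hmemI n).2⟩
    -- sequence along the u-axis
    have ht1 : Tendsto (fun n : ℕ => (((1:ℝ) / (n + 1), (0:ℝ)) : ℝ × ℝ))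
        atTop (𝓝[S] (0, 0)) := by
      rw [tendsto_nhdsWithin_iff]
      constructor
      · exact (hseq.prodMk_nhds tendsto_const_nhds)
      · exact Eventually.of_forall fun n => ⟨hIcc n, by norm_num⟩
    have ht2 : Tendsto (fun n : ℕ => (((0:ℝ), (1:ℝ) / (n + 1)) : ℝ × ℝ))
        atTop (𝓝[S] (0, 0)) := by
      rw [tendsto_nhdsWithin_iff]
      constructor
      · exact (tendsto_const_nhds.prodMk_nhds hseq)
      · exact Eventually.of_forall fun n => ⟨by norm_num, hIcc n⟩
    have hlim1 : Tendsto (fun n : ℕ => g ((1:ℝ) / (n + 1), 0)) atTop (𝓝 (g (0, 0))) :=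
      hg3.tendsto.comp ht1
    have hg00 : g (0, 0) = 0 := by
      have heq : (fun n : ℕ => g ((1:ℝ) / (n + 1), 0)) =ᶠ[atTop] fun _ => (0:ℝ) := by
        filter_upwards [eventually_ge_atTop 1] with n hn
        have hlt : (1:ℝ) / (n + 1) < 1 := by
          rw [div_lt_one (by positivity)]
          have : (1:ℝ) ≤ (n:ℝ) := by exact_mod_cast hn
          linarith
        exact hg1 _ ⟨(hmemI n).1, hlt⟩
      have : Tendsto (fun _ : ℕ => (0:ℝ)) atTop (𝓝 (g (0, 0))) := hlim1.congr' heq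
      exact (tendsto_nhds_unique tendsto_const_nhds this).symm
    have hlim2 : Tendsto (fun n : ℕ => g (0, (1:ℝ) / (n + 1))) atTop (𝓝 (g (0, 0))) :=
      hg3.tendsto.comp ht2
    have hge : lam ≤ g (0, 0) := by
      apply ge_of_tendsto hlim2
      apply Eventually.of_forall
      intro n
      rw [hg2 _ (hmemI n)]
      exact (part1 _ (hmemI n)).2
    rw [hg00] at hge
    exact absurd hge (not_le.2 hlam)
end

section
/- Let d ≥ 2 and let φ : [0,1] → [0,∞] be convex, strictly decreasing and continuous with φ(1) = 0 and φ finite on (0,1], continuously differentiable on (0,1] with φ′(u) < 0 for u ∈ (0,1), and lim_{u↓0} φ′(u) = −∞. Let φ^{-1}(x) = inf{u ∈ [0,1] : φ(u) ≤ x} for x ∈ [0,∞), and define the Archimedean function C(u) = φ^{-1}( φ(u_1) + ⋯ + φ(u_d) ) for u ∈ [0,1]^d (with φ(0) interpreted as lim_{u↓0} φ(u) ∈ (0,∞]). Then for each j ∈ {1,…,d}, the first-order partial derivative Ċ_j exists and is continuous on V_{d,j} = {u ∈ [0,1]^d : 0 < u_j < 1}, with Ċ_j(u) = φ′(u_j)/φ′(C(u))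 whenever C(u) > 0 and Ċ_j(u) = 0 whenever C(u) = 0; in particular, Ċ_j(u) = 0 whenever u_i = 0 for some i ≠ j, and C satisfies Condition 1. -/
open MeasureTheory Filter Set
open scoped ENNReal Topology

noncomputable section

/-- The generalized inverse `φ⁻¹(x) = inf {u ∈ [0,1] : φ(u) ≤ x}` of an Archimedean
generator, and the associated Archimedean function
`C(u) = φ⁻¹(φ(u₁) + ⋯ + φ(u_d))` (the sum being taken in `[0,∞]`). -/
def archimedean {d : ℕ} (φ : ℝ → ℝ≥0∞) (u : Fin d → ℝ) : ℝ :=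
  sInf {s : ℝ | s ∈ Icc (0 : ℝ) 1 ∧ φ s ≤ ∑ j, φ (u j)}


namespace ArchAux

variable {φ : ℝ → ℝ≥0∞}

/-- The admissible set. -/
def A (φ : ℝ → ℝ≥0∞) (x : ℝ≥0∞) : Set ℝ := {s : ℝ | s ∈ Icc (0 : ℝ) 1 ∧ φ s ≤ x}

/-- The generalized inverse. -/
def Ainv (φ : ℝ → ℝ≥0∞) (x : ℝ≥0∞) : ℝ := sInf (A φ x)

lemma one_mem (hφ1 : φ 1 = 0) (x : ℝ≥0∞) : (1 : ℝ) ∈ A φ x :=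
  ⟨⟨zero_le_one, le_refl 1⟩, by simp [hφ1]⟩

lemma bdd (x : ℝ≥0∞) : BddBelow (A φ x) := ⟨0, fun s hs => hs.1.1⟩

lemma Ainv_nonneg (hφ1 : φ 1 = 0) (x : ℝ≥0∞) : 0 ≤ Ainv φ x :=
  le_csInf ⟨1, one_mem hφ1 x⟩ fun s hs => hs.1.1

lemma Ainv_le_one (hφ1 : φ 1 = 0) (x : ℝ≥0∞) : Ainv φ x ≤ 1 :=
  csInf_le (bdd x) (one_mem hφ1 x)

lemma isClosed_A (hcont : ContinuousOn φ (Icc (0 : ℝ) 1)) (x : ℝ≥0∞) : IsClosed (A φ x) := by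
  have : A φ x = Icc (0:ℝ) 1 ∩ φ ⁻¹' (Iic x) := rfl
  rw [this]
  exact hcont.preimage_isClosed_of_isClosed isClosed_Icc isClosed_Iic

lemma Ainv_mem (hφ1 : φ 1 = 0) (hcont : ContinuousOn φ (Icc (0 : ℝ) 1)) (x : ℝ≥0∞) :
    Ainv φ x ∈ A φ x :=
  (isClosed_A hcont x).csInf_mem ⟨1, one_mem hφ1 x⟩ (bdd x)

lemma Ainv_le {s : ℝ} {x : ℝ≥0∞} (hs : s ∈ Icc (0:ℝ) 1) (h : φ s ≤ x) : Ainv φ x ≤ s :=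
  csInf_le (bdd x) ⟨hs, h⟩

lemma le_Ainv (hφ1 : φ 1 = 0) (hanti : StrictAntiOn φ (Icc (0 : ℝ) 1))
    {s : ℝ} {x : ℝ≥0∞} (hs : s ∈ Icc (0:ℝ) 1) (h : x < φ s) : s ≤ Ainv φ x := by
  refine le_csInf ⟨1, one_mem hφ1 x⟩ fun a ha => ?_
  by_contra hlt
  push_neg at hlt
  exact absurd (lt_of_le_of_lt ha.2 h) (not_lt.2 ((hanti ha.1 hs hlt).le))

lemma Ainv_eq_zero_iff (hφ1 : φ 1 = 0) (hcont : ContinuousOn φ (Icc (0 : ℝ) 1)) (x : ℝ≥0∞) :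
    Ainv φ x = 0 ↔ φ 0 ≤ x := by
  constructor
  · intro h
    have := (Ainv_mem hφ1 hcont x).2
    rwa [h] at this
  · intro h
    exact le_antisymm (Ainv_le ⟨le_refl 0, zero_le_one⟩ h) (Ainv_nonneg hφ1 x)

lemma phi_Ainv (hφ1 : φ 1 = 0) (hanti : StrictAntiOn φ (Icc (0 : ℝ) 1))
    (hcont : ContinuousOn φ (Icc (0 : ℝ) 1)) {x : ℝ≥0∞} (h : 0 < Ainv φ x) :
    φ (Ainv φ x) = x := by
  set c := Ainv φ x with hc
  have hmem := Ainv_mem hφ1 hcont x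
  refine le_antisymm hmem.2 ?_
  -- every s < c is not in A, so x < φ s; take the limit s → c⁻
  have hnot : ∀ s ∈ Ico (0:ℝ) c, x ≤ φ s := by
    intro s hs
    by_contra hlt
    push_neg at hlt
    have : s ∈ A φ x := ⟨⟨hs.1, hs.2.le.trans hmem.1.2⟩, hlt.le⟩
    exact absurd (csInf_le (bdd x) this) (not_le.2 hs.2)
  have hne : (𝓝[Ico (0:ℝ) c] c).NeBot := by
    rw [← mem_closure_iff_nhdsWithin_neBot, closure_Ico h.ne]
    exact ⟨h.le, le_refl c⟩
  have htend : Tendsto φ (𝓝[Ico (0:ℝ) c] c) (𝓝 (φ c)) :=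
    ((hcont c hmem.1).mono (fun s hs => ⟨hs.1, hs.2.le.trans hmem.1.2⟩)).tendsto
  exact ge_of_tendsto htend (eventually_nhdsWithin_of_forall hnot)

lemma continuousAt_Ainv (hφ1 : φ 1 = 0) (hanti : StrictAntiOn φ (Icc (0 : ℝ) 1))
    (hcont : ContinuousOn φ (Icc (0 : ℝ) 1)) (x₀ : ℝ≥0∞) :
    ContinuousAt (Ainv φ) x₀ := by
  set c := Ainv φ x₀ with hc
  have hmem := Ainv_mem hφ1 hcont x₀
  refine tendsto_order.2 ⟨fun a ha => ?_, fun b hb => ?_⟩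
  · rcases lt_or_ge a 0 with ha0 | ha0
    · exact Eventually.of_forall fun x => lt_of_lt_of_le ha0 (Ainv_nonneg hφ1 x)
    · set s := (a + c) / 2 with hs
      have hac : a < s := by rw [hs]; linarith
      have hsc : s < c := by rw [hs]; linarith
      have hsIcc : s ∈ Icc (0:ℝ) 1 := ⟨ha0.trans hac.le, hsc.le.trans hmem.1.2⟩
      have hφs : x₀ < φ s := by
        by_contra hle
        push_neg at hle
        exact absurd (Ainv_le hsIcc hle) (not_le.2 hsc)
      have hev : ∀ᶠ x in 𝓝 x₀, x ∈ Iio (φ s) := isOpen_Iio.eventually_mem hφs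
      exact hev.mono fun x hx => lt_of_lt_of_le hac (le_Ainv hφ1 hanti hsIcc hx)
  · rcases lt_or_ge 1 b with hb1 | hb1
    · exact Eventually.of_forall fun x => lt_of_le_of_lt (Ainv_le_one hφ1 x) hb1
    · set s := (c + b) / 2 with hs
      have hcs : c < s := by rw [hs]; linarith
      have hsb : s < b := by rw [hs]; linarith
      have hsIcc : s ∈ Icc (0:ℝ) 1 := ⟨hmem.1.1.trans hcs.le, hsb.le.trans hb1⟩
      have hφs : φ s < x₀ := lt_of_lt_of_le (hanti hmem.1 hsIcc hcs) hmem.2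
      have hev : ∀ᶠ x in 𝓝 x₀, x ∈ Ioi (φ s) := isOpen_Ioi.eventually_mem hφs
      exact hev.mono fun x hx => lt_of_le_of_lt (Ainv_le hsIcc hx.le) hsb

end ArchAux

open ArchAux

/-- **Example 3 (Archimedean copulas).** If the generator `φ` is continuously differentiable
on `(0,1]` with `φ' < 0` on `(0,1)` and `φ'(0+) = −∞`, then each first-order partial
derivative `Ċ_j` of the Archimedean function `C` exists and is continuous on
`V_{d,j} = {u ∈ [0,1]^d : 0 < u_j < 1}`, with `Ċ_j(u) = φ'(u_j)/φ'(C(u))` when `C(u) > 0`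
and `Ċ_j(u) = 0` when `C(u) = 0`; in particular `Ċ_j(u) = 0` whenever `u_i = 0` for some
`i ≠ j`, and `C` satisfies Condition 1. -/
theorem archimedean_copula_condition_one
    (d : ℕ) (hd : 2 ≤ d)
    (φ : ℝ → ℝ≥0∞)
    -- φ : [0,1] → [0,∞] is convex, strictly decreasing, continuous, φ(1) = 0,
    -- finite on (0,1] (with φ(0) = lim_{u↓0} φ(u) by continuity)
    (hφ1 : φ 1 = 0)
    (hfin : ∀ u ∈ Ioc (0 : ℝ) 1, φ u < ⊤)
    (hanti : StrictAntiOn φ (Icc (0 : ℝ) 1))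
    (hcont : ContinuousOn φ (Icc (0 : ℝ) 1))
    (hconv : ConvexOn ℝ (Ioc (0 : ℝ) 1) (fun u => (φ u).toReal))
    -- φ is continuously differentiable on (0,1], with φ' < 0 on (0,1) and φ'(0+) = −∞
    (φd : ℝ → ℝ)
    (hφd : ∀ u ∈ Ioo (0 : ℝ) 1, HasDerivAt (fun t => (φ t).toReal) (φd u) u)
    (hφd1 : HasDerivWithinAt (fun t => (φ t).toReal) (φd 1) (Iic (1 : ℝ)) 1)
    (hφdcont : ContinuousOn φd (Ioc (0 : ℝ) 1))
    (hφdneg : ∀ u ∈ Ioo (0 : ℝ) 1, φd u < 0)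
    (hφdinf : Tendsto φd (𝓝[>] (0 : ℝ)) atBot) :
    ∃ Cdot : Fin d → (Fin d → ℝ) → ℝ, ∀ j : Fin d,
      (∀ u : Fin d → ℝ, u ∈ Icc 0 1 → 0 < u j → u j < 1 →
        HasDerivAt (fun t => archimedean φ (Function.update u j t)) (Cdot j u) (u j)) ∧
      ContinuousOn (Cdot j) {u : Fin d → ℝ | u ∈ Icc 0 1 ∧ 0 < u j ∧ u j < 1} ∧
      (∀ u : Fin d → ℝ, u ∈ Icc 0 1 → 0 < u j → u j < 1 →
        (0 < archimedean φ u → Cdot j u = φd (u j) / φd (archimedean φ u)) ∧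
        (archimedean φ u = 0 → Cdot j u = 0) ∧
        ((∃ i : Fin d, i ≠ j ∧ u i = 0) → Cdot j u = 0)) := by
  classical
  set F : ℝ → ℝ := fun t => (φ t).toReal with hF
  have harch0 : ∀ u : Fin d → ℝ, archimedean φ u = Ainv φ (∑ i, φ (u i)) := fun u => rfl
  have hφpos : ∀ s ∈ Ico (0:ℝ) 1, 0 < φ s := by
    intro s hs
    have := hanti ⟨hs.1, hs.2.le⟩ ⟨zero_le_one, le_refl 1⟩ hs.2
    rwa [hφ1] at this
  have hupd : ∀ (u : Fin d → ℝ) (j : Fin d) (t : ℝ),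
      ∑ i, φ (Function.update u j t i)
        = φ t + ∑ i ∈ Finset.univ.erase j, φ (u i) := by
    intro u j t
    rw [← Finset.add_sum_erase _ (fun i => φ (Function.update u j t i)) (Finset.mem_univ j)]
    rw [Function.update_self]
    congr 1
    exact Finset.sum_congr rfl fun i hi => by
      rw [Function.update_of_ne (Finset.ne_of_mem_erase hi)]
  refine ⟨fun j u => if 0 < archimedean φ u then φd (u j) / φd (archimedean φ u) else 0,
    fun j => ⟨?_, ?_, ?_⟩⟩
  · -- derivative
    intro u hu h0 h1
    set t₀ := u j with ht₀
    set R : ℝ≥0∞ := ∑ i ∈ Finset.univ.erase j, φ (u i) with hR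
    have hSu : ∑ i, φ (u i) = φ t₀ + R := by
      conv_lhs => rw [← Function.update_eq_self j u]
      exact hupd u j t₀
    have harch : ∀ t, archimedean φ (Function.update u j t) = Ainv φ (φ t + R) := by
      intro t; rw [harch0, hupd]
    have hfun : (fun t => archimedean φ (Function.update u j t))
        = fun t => Ainv φ (φ t + R) := funext harch
    have harchu : archimedean φ u = Ainv φ (φ t₀ + R) := by rw [harch0, hSu]
    rw [hfun]
    have hφt₀top : φ t₀ ≠ ⊤ := (hfin t₀ ⟨h0, h1.le⟩).ne
    have hφt₀pos : 0 < φ t₀ := hφpos t₀ ⟨h0.le, h1⟩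
    rcases (Ainv_nonneg hφ1 (φ t₀ + R)).lt_or_eq with hC | hC
    · -- C > 0 : implicit function theorem
      set C := Ainv φ (φ t₀ + R) with hCdef
      have hCmem := Ainv_mem hφ1 hcont (φ t₀ + R)
      have hφC : φ C = φ t₀ + R := phi_Ainv hφ1 hanti hcont hC
      have hStop : φ t₀ + R ≠ ⊤ := by
        rw [← hφC]; exact (hfin C ⟨hC, hCmem.1.2⟩).ne
      have hRtop : R ≠ ⊤ := by
        intro h; rw [h] at hStop; simp at hStop
      have hC1 : C < 1 := by
        rcases (Ainv_le_one hφ1 (φ t₀ + R)).lt_or_eq with h | h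
        · exact h
        · exfalso
          have : φ C = 0 := by rw [hCdef, h, hφ1]
          rw [hφC] at this
          rcases add_eq_zero.1 this with ⟨h', -⟩
          exact hφt₀pos.ne' h'
      set r := R.toReal with hr
      set g : ℝ → ℝ := fun x => Ainv φ (ENNReal.ofReal x) with hg
      have hofReal : ∀ t ∈ Ioc (0:ℝ) 1, ENNReal.ofReal (F t + r) = φ t + R := by
        intro t ht
        rw [ENNReal.ofReal_add ENNReal.toReal_nonneg ENNReal.toReal_nonneg,
          ENNReal.ofReal_toReal (hfin t ht).ne, ENNReal.ofReal_toReal hRtop]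
      set x₀ := F t₀ + r with hx₀
      have hgx₀ : g x₀ = C := by rw [hg]; simp only; rw [hofReal t₀ ⟨h0, h1.le⟩]
      have hgc : ContinuousAt g x₀ :=
        (continuousAt_Ainv hφ1 hanti hcont _).comp ENNReal.continuous_ofReal.continuousAt
      have hfg : ∀ᶠ x in 𝓝 x₀, F (g x) = x := by
        have h1' : ∀ᶠ x in 𝓝 x₀, g x ∈ Ioo (0:ℝ) 1 := by
          refine hgc.eventually ?_
          rw [hgx₀]
          exact isOpen_Ioo.eventually_mem ⟨hC, hC1⟩
        have h2' : ∀ᶠ x in 𝓝 x₀, 0 < x := by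
          have ha1 : 0 < F t₀ := ENNReal.toReal_pos hφt₀pos.ne' hφt₀top
          have ha2 : 0 ≤ r := ENNReal.toReal_nonneg
          have hx0pos : x₀ ∈ Ioi (0:ℝ) := by
            simp only [mem_Ioi, hx₀]; linarith
          exact isOpen_Ioi.eventually_mem hx0pos
        filter_upwards [h1', h2'] with x hx hx0
        have heq := phi_Ainv hφ1 hanti hcont (x := ENNReal.ofReal x) hx.1
        show (φ (g x)).toReal = x
        rw [show φ (g x) = ENNReal.ofReal x from heq, ENNReal.toReal_ofReal hx0.le]
      have hfd : HasDerivAt F (φd C) (g x₀) := by rw [hgx₀]; exact hφd C ⟨hC, hC1⟩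
      have hgd : HasDerivAt g (φd C)⁻¹ x₀ :=
        HasDerivAt.of_local_left_inverse hgc hfd (hφdneg C ⟨hC, hC1⟩).ne hfg
      have hcomp : HasDerivAt (fun t => g (F t + r)) ((φd C)⁻¹ * φd t₀) t₀ :=
        by have := hgd.comp t₀ ((hφd t₀ ⟨h0, h1⟩).add_const r); exact this
      have hev : (fun t => Ainv φ (φ t + R)) =ᶠ[𝓝 t₀] fun t => g (F t + r) := by
        filter_upwards [isOpen_Ioo.eventually_mem (⟨h0, h1⟩ : t₀ ∈ Ioo (0:ℝ) 1)] with t ht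
        rw [hg]; simp only; rw [hofReal t ⟨ht.1, ht.2.le⟩]
      have hder := hcomp.congr_of_eventuallyEq hev
      have hval : (if 0 < archimedean φ u then φd (u j) / φd (archimedean φ u) else 0)
          = (φd C)⁻¹ * φd t₀ := by
        rw [if_pos (by rw [harchu]; exact hC)]
        rw [harchu, div_eq_inv_mul]
      simpa only [hval] using hder
    · -- C = 0
      have hC0 : Ainv φ (φ t₀ + R) = 0 := hC.symm
      have hval0 : (if 0 < archimedean φ u then φd (u j) / φd (archimedean φ u) else 0) = 0 := by
        rw [if_neg]; rw [harchu, hC0]; exact lt_irrefl 0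
      have hφ0le : φ 0 ≤ φ t₀ + R := (Ainv_eq_zero_iff hφ1 hcont _).1 hC0
      simp only [hval0]
      by_cases hRφ0 : φ 0 ≤ R
      · -- the function is identically 0
        have hz : ∀ t, Ainv φ (φ t + R) = 0 := fun t =>
          (Ainv_eq_zero_iff hφ1 hcont _).2 (hRφ0.trans le_add_self)
        simp only [hz]
        exact hasDerivAt_const t₀ 0
      · push_neg at hRφ0
        have hRtop : R ≠ ⊤ := hRφ0.ne_top
        have hφ0top : φ 0 ≠ ⊤ := by
          intro htop
          have : φ t₀ + R < ⊤ :=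
            ENNReal.add_lt_top.2 ⟨(hfin t₀ ⟨h0, h1.le⟩), hRtop.lt_top⟩
          rw [htop] at hφ0le
          exact absurd (top_le_iff.1 hφ0le) this.ne
        have hφcontAt : ContinuousAt φ t₀ := hcont.continuousAt (Icc_mem_nhds h0 h1)
        have hScontAt : ContinuousAt (fun t => φ t + R) t₀ :=
          hφcontAt.add continuousAt_const
        rcases hφ0le.lt_or_eq with hlt | heq
        · -- locally identically 0
          have hev : ∀ᶠ t in 𝓝 t₀, Ainv φ (φ t + R) = 0 := by
            filter_upwards [hScontAt.eventually (isOpen_Ioi.eventually_mem hlt)] with t ht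
            exact (Ainv_eq_zero_iff hφ1 hcont _).2 ht.le
          refine (hasDerivAt_const t₀ (0:ℝ)).congr_of_eventuallyEq ?_
          filter_upwards [hev] with t ht
          exact ht
        · -- boundary case: use φ'(0+) = -∞
          rw [hasDerivAt_iff_isLittleO, Asymptotics.isLittleO_iff]
          intro ε hε
          -- local Lipschitz bound on F near t₀
          obtain ⟨K, hK⟩ := ((hφd t₀ ⟨h0, h1⟩).isBigO_sub).bound
          set K' := max K 1 with hK'def
          have hK'pos : (0:ℝ) < K' := lt_of_lt_of_le one_pos (le_max_right _ _)
          have hK' : ∀ᶠ t in 𝓝 t₀, |F t - F t₀| ≤ K' * |t - t₀| := by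
            filter_upwards [hK] with t ht
            calc |F t - F t₀| ≤ K * |t - t₀| := by simpa [Real.norm_eq_abs] using ht
              _ ≤ K' * |t - t₀| :=
                mul_le_mul_of_nonneg_right (le_max_left _ _) (abs_nonneg _)
          -- a cutoff below which -φd is huge
          have hM : ∀ᶠ s in 𝓝[>] (0:ℝ), φd s ≤ -(K'/ε + 1) :=
            hφdinf.eventually (eventually_le_atBot _)
          obtain ⟨δ, hδmem, hδ⟩ := mem_nhdsGT_iff_exists_Ioo_subset.1 hM
          have hδpos : (0:ℝ) < δ := hδmem
          -- continuity of the partial map at t₀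
          have hcontC : Tendsto (fun t => Ainv φ (φ t + R)) (𝓝 t₀) (𝓝 0) := by
            have h := ((continuousAt_Ainv hφ1 hanti hcont (φ t₀ + R)).tendsto).comp hScontAt
            rw [hC0] at h
            exact h
          have hsmall : ∀ᶠ t in 𝓝 t₀, Ainv φ (φ t + R) < min δ 1 :=
            hcontC.eventually (isOpen_Iio.eventually_mem (lt_min hδpos one_pos))
          have hFcont : ContinuousOn F (Icc (0:ℝ) 1) := by
            intro s hs
            have hstop : φ s ≠ ⊤ := by
              refine fun htop => hφ0top ?_
              have := hanti.antitoneOn ⟨le_refl 0, zero_le_one⟩ hs hs.1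
              rw [htop] at this
              exact top_le_iff.1 this
            exact (ENNReal.continuousAt_toReal hstop).comp_continuousWithinAt (hcont s hs)
          have hF0 : F 0 = F t₀ + R.toReal := by
            show (φ 0).toReal = (φ t₀).toReal + R.toReal
            rw [heq, ENNReal.toReal_add (hfin t₀ ⟨h0, h1.le⟩).ne hRtop]
          filter_upwards [hK', hsmall,
            isOpen_Ioo.eventually_mem (⟨h0, h1⟩ : t₀ ∈ Ioo (0:ℝ) 1)] with t hKt hst htIoo
          simp only [hC0, smul_zero, sub_zero, Real.norm_eq_abs]
          set c := Ainv φ (φ t + R) with hc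
          rcases (Ainv_nonneg hφ1 (φ t + R)).lt_or_eq with hcpos | hczero
          swap
          · have hcz : c = 0 := hczero.symm
            rw [hcz, abs_zero]
            positivity
          · have hcδ : c < δ := lt_of_lt_of_le hst (min_le_left _ _)
            have hc1 : c < 1 := lt_of_lt_of_le hst (min_le_right _ _)
            have hφc : φ c = φ t + R := phi_Ainv hφ1 hanti hcont hcpos
            have hFc : F c = F t + R.toReal := by
              show (φ c).toReal = (φ t).toReal + R.toReal
              rw [hφc, ENNReal.toReal_add (hfin t ⟨htIoo.1, htIoo.2.le⟩).ne hRtop]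
            obtain ⟨ξ, hξ, hslope⟩ := exists_hasDerivAt_eq_slope F φd hcpos
              (hFcont.mono (Icc_subset_Icc (le_refl 0) hc1.le))
              (fun x hx => hφd x ⟨hx.1, hx.2.trans hc1⟩)
            have hξδ : φd ξ ≤ -(K'/ε + 1) := hδ ⟨hξ.1, hξ.2.trans hcδ⟩
            have hMpos : (0:ℝ) < K'/ε + 1 := by positivity
            have hξne : φd ξ < 0 := lt_of_le_of_lt hξδ (by linarith)
            -- c = (F t - F t₀) / φd ξ
            have hceq : φd ξ * c = F t - F t₀ := by
              rw [hslope]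
              field_simp
              rw [hFc, hF0]
              ring
            have habs : |φd ξ| * |c| = |F t - F t₀| := by
              rw [← abs_mul, hceq]
            have hlower : K'/ε + 1 ≤ |φd ξ| := by
              rw [abs_of_neg hξne]; linarith
            have hupper : |c| ≤ K' * |t - t₀| / (K'/ε + 1) := by
              rw [le_div_iff₀ hMpos]
              calc |c| * (K'/ε + 1) ≤ |c| * |φd ξ| :=
                    mul_le_mul_of_nonneg_left hlower (abs_nonneg _)
                _ = |F t - F t₀| := by rw [mul_comm]; exact habs
                _ ≤ K' * |t - t₀| := hKt
            calc |c| ≤ K' * |t - t₀| / (K'/ε + 1) := hupper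
              _ ≤ ε * |t - t₀| := by
                  rw [div_le_iff₀ hMpos]
                  have h1 : ε * (K'/ε + 1) = K' + ε := by field_simp
                  have h2 : K' * |t - t₀| ≤ (K' + ε) * |t - t₀| :=
                    mul_le_mul_of_nonneg_right (by linarith) (abs_nonneg _)
                  calc K' * |t - t₀| ≤ (K' + ε) * |t - t₀| := h2
                    _ = ε * (K'/ε + 1) * |t - t₀| := by rw [h1]
                    _ = ε * |t - t₀| * (K'/ε + 1) := by ring
  · -- continuity
    intro u₀ hu₀
    set S : Set (Fin d → ℝ) := {u : Fin d → ℝ | u ∈ Icc 0 1 ∧ 0 < u j ∧ u j < 1} with hSdef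
    obtain ⟨hu₀Icc, hj0, hj1⟩ := hu₀
    show ContinuousWithinAt
      (fun u : Fin d → ℝ => if 0 < archimedean φ u then φd (u j) / φd (archimedean φ u) else 0)
      S u₀
    have hSV : ContinuousWithinAt (fun u : Fin d → ℝ => ∑ i, φ (u i)) S u₀ := by
      apply tendsto_finset_sum
      intro i _
      have happ : ContinuousWithinAt (fun u : Fin d → ℝ => u i) S u₀ :=
        (continuous_apply i).continuousWithinAt
      have hmaps : MapsTo (fun u : Fin d → ℝ => u i) S (Icc (0:ℝ) 1) := by
        intro u hu
        exact ⟨hu.1.1 i, hu.1.2 i⟩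
      exact (ContinuousWithinAt.comp (g := φ) (f := fun u : Fin d → ℝ => u i)
        (s := S) (t := Icc (0:ℝ) 1) (x := u₀)
        (hcont (u₀ i) ⟨hu₀Icc.1 i, hu₀Icc.2 i⟩) happ hmaps).tendsto
    have hCV : ContinuousWithinAt (archimedean φ) S u₀ := by
      have := (continuousAt_Ainv hφ1 hanti hcont (∑ i, φ (u₀ i))).tendsto.comp hSV
      exact this
    have hnum : ContinuousWithinAt (fun u : Fin d → ℝ => φd (u j)) S u₀ := by
      have happ : ContinuousWithinAt (fun u : Fin d → ℝ => u j) S u₀ :=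
        (continuous_apply j).continuousWithinAt
      exact ContinuousAt.comp_continuousWithinAt
        (hφdcont.continuousAt (Ioc_mem_nhds hj0 hj1)) happ
    rcases (Ainv_nonneg hφ1 (∑ i, φ (u₀ i))).lt_or_eq with hpos | hzero
    · -- C(u₀) > 0
      have hpos' : 0 < archimedean φ u₀ := by rw [harch0]; exact hpos
      have hC1 : archimedean φ u₀ < 1 := by
        rcases (Ainv_le_one hφ1 (∑ i, φ (u₀ i))).lt_or_eq with h | h
        · rw [harch0]; exact h
        · exfalso
          have h0' : φ (Ainv φ (∑ i, φ (u₀ i))) = ∑ i, φ (u₀ i) :=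
            phi_Ainv hφ1 hanti hcont hpos
          rw [h, hφ1] at h0'
          have hge : φ (u₀ j) ≤ ∑ i, φ (u₀ i) :=
            Finset.single_le_sum (f := fun k => φ (u₀ k)) (fun k _ => zero_le)
              (Finset.mem_univ j)
          rw [← h0'] at hge
          exact (hφpos (u₀ j) ⟨hj0.le, hj1⟩).ne' (le_antisymm hge zero_le)
      have hev : ∀ᶠ u in 𝓝[S] u₀, 0 < archimedean φ u :=
        hCV.eventually (isOpen_Ioi.eventually_mem hpos')
      have hden : ContinuousWithinAt (fun u : Fin d → ℝ => φd (archimedean φ u)) S u₀ :=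
        (hφdcont.continuousAt (Ioc_mem_nhds hpos' hC1)).comp_continuousWithinAt hCV
      have hdenne : φd (archimedean φ u₀) ≠ 0 := (hφdneg _ ⟨hpos', hC1⟩).ne
      refine ((hnum.div hden hdenne).congr_of_eventuallyEq ?_ ?_)
      · filter_upwards [hev] with u hu
        exact if_pos hu
      · exact if_pos hpos'
    · -- C(u₀) = 0
      have hz : archimedean φ u₀ = 0 := by rw [harch0]; exact hzero.symm
      have hCV0 : Tendsto (archimedean φ) (𝓝[S] u₀) (𝓝 0) := by
        have h' := hCV
        unfold ContinuousWithinAt at h'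
        rw [hz] at h'
        exact h'
      have hval0 : (if 0 < archimedean φ u₀ then φd (u₀ j) / φd (archimedean φ u₀) else 0)
          = (0:ℝ) := by simp [hz]
      unfold ContinuousWithinAt
      simp only [hval0]
      rw [NormedAddCommGroup.tendsto_nhds_zero]
      intro ε hε
      set B := |φd (u₀ j)| + 1 with hB
      have hBpos : 0 < B := by positivity
      have hnumB : ∀ᶠ u in 𝓝[S] u₀, |φd (u j)| < B := by
        refine (hnum.tendsto.abs).eventually (isOpen_Iio.eventually_mem ?_)
        exact mem_Iio.2 (by rw [hB]; exact lt_add_one _)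
      have hM : ∀ᶠ s in 𝓝[>] (0:ℝ), φd s ≤ -(B/ε + 1) :=
        hφdinf.eventually (eventually_le_atBot _)
      obtain ⟨δ, hδmem, hδ⟩ := mem_nhdsGT_iff_exists_Ioo_subset.1 hM
      have hδpos : (0:ℝ) < δ := hδmem
      have hsmall : ∀ᶠ u in 𝓝[S] u₀, archimedean φ u < δ :=
        hCV0.eventually (isOpen_Iio.eventually_mem hδpos)
      filter_upwards [hnumB, hsmall] with u hBu hδu
      by_cases hposu : 0 < archimedean φ u
      · rw [if_pos hposu]
        have hφdC : φd (archimedean φ u) ≤ -(B/ε + 1) := hδ ⟨hposu, hδu⟩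
        have hMpos : (0:ℝ) < B/ε + 1 := by positivity
        have hneg : φd (archimedean φ u) < 0 := lt_of_le_of_lt hφdC (by linarith)
        have hlower : B/ε + 1 ≤ |φd (archimedean φ u)| := by
          rw [abs_of_neg hneg]; linarith
        rw [Real.norm_eq_abs, abs_div]
        have hle : |φd (u j)| / |φd (archimedean φ u)| ≤ B / (B/ε + 1) :=
          div_le_div₀ hBpos.le hBu.le hMpos hlower
        refine lt_of_le_of_lt hle ?_
        rw [div_lt_iff₀ hMpos]
        have heq : ε * (B/ε + 1) = B + ε := by field_simp
        rw [heq]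
        linarith
      · rw [if_neg hposu]
        simpa using hε
  · -- formulas
    intro u hu h0 h1
    refine ⟨fun hpos => if_pos hpos, fun hzero => by simp [hzero], ?_⟩
    rintro ⟨i, hij, hi0⟩
    have hle : φ 0 ≤ ∑ k, φ (u k) := by
      have := Finset.single_le_sum (f := fun k => φ (u k))
        (fun k _ => zero_le) (Finset.mem_univ i)
      simpa [hi0] using this
    have hz : archimedean φ u = 0 := by
      rw [harch0]; exact (Ainv_eq_zero_iff hφ1 hcont _).2 hle
    simp [hz]

end
end

section
/- Let d ≥ 2 and let φ : [0,1] → [0,∞] be convex, strictly decreasing and continuous with φ(1) = 0, φ finite on (0,1], and lim_{u↓0} φ(u) = ∞. Let φ^{-1}(x) = inf{u ∈ [0,1] : φ(u) ≤ x}, define C(u) = φ^{-1}( φ(u_1) + ⋯ + φ(u_d) ), and assume that φ^{-1} is long-tailed: lim_{x→∞} φ^{-1}(x+y)/φ^{-1}(x) = 1 for every y ∈ ℝ. Then for every u_{-1} = (u_2, …, u_d) ∈ (0,1]^{d−1}, lim_{u_1↓0} C(u_1, u_2, …, u_d)/u_1 = 1. -/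
open MeasureTheory Filter Set
open scoped ENNReal Topology

noncomputable section

/-- The generalized inverse `φ⁻¹(x) = inf {u ∈ [0,1] : φ(u) ≤ x}` of an Archimedean
generator, for `x ∈ [0,∞)`. -/
def archInv (φ : ℝ → ℝ≥0∞) (x : ℝ) : ℝ :=
  sInf {u : ℝ | u ∈ Icc (0 : ℝ) 1 ∧ φ u ≤ ENNReal.ofReal x}

theorem aux_arch (d : ℕ) (φ : ℝ → ℝ≥0∞)
    (hfin : ∀ u ∈ Ioc (0 : ℝ) 1, φ u < ⊤)
    (hanti : StrictAntiOn φ (Icc (0 : ℝ) 1))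
    (hinfty : Tendsto φ (𝓝[>] (0 : ℝ)) (𝓝 ⊤))
    (hlongtail : ∀ y : ℝ, Tendsto (fun x : ℝ => archInv φ (x + y) / archInv φ x) atTop (𝓝 1))
    (i0 : Fin d) (u : Fin d → ℝ) (hu : ∀ j : Fin d, j ≠ i0 → u j ∈ Ioc (0 : ℝ) 1) :
    Tendsto (fun t : ℝ => archimedean φ (Function.update u i0 t) / t) (𝓝[>] 0) (𝓝 1) := by
  set Y : ℝ≥0∞ := ∑ j ∈ Finset.univ \ {i0}, φ (u j) with hYdef
  have hYne : Y ≠ ⊤ := by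
    refine (ENNReal.sum_lt_top.mpr fun j hj => ?_).ne
    exact hfin (u j) (hu j (Finset.notMem_singleton.mp (Finset.mem_sdiff.mp hj).2))
  set y := Y.toReal with hydef
  have hsum : ∀ t : ℝ, ∑ j, φ (Function.update u i0 t j) = φ t + Y := by
    intro t
    have h1 : ∀ j, φ (Function.update u i0 t j)
        = Function.update (fun k => φ (u k)) i0 (φ t) j :=
      fun j => Function.apply_update (fun _ v => φ v) u i0 t j
    simp_rw [h1]
    exact Finset.sum_update_of_mem (Finset.mem_univ i0) _ _
  have hinv : ∀ t ∈ Ioc (0:ℝ) 1, archInv φ ((φ t).toReal) = t := by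
    intro t ht
    have htop : φ t ≠ ⊤ := (hfin t ht).ne
    have hofr : ENNReal.ofReal (φ t).toReal = φ t := ENNReal.ofReal_toReal htop
    have htI : t ∈ Icc (0:ℝ) 1 := ⟨ht.1.le, ht.2⟩
    have hset : {s : ℝ | s ∈ Icc (0:ℝ) 1 ∧ φ s ≤ ENNReal.ofReal (φ t).toReal} = Icc t 1 := by
      ext s
      simp only [mem_setOf_eq, hofr, mem_Icc]
      constructor
      · rintro ⟨⟨h0, h1⟩, hle⟩
        refine ⟨?_, h1⟩
        by_contra h
        push_neg at h
        exact absurd hle (not_le.mpr (hanti ⟨h0, h1⟩ htI h))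
      · rintro ⟨h1, h2⟩
        exact ⟨⟨ht.1.le.trans h1, h2⟩, hanti.antitoneOn htI ⟨ht.1.le.trans h1, h2⟩ h1⟩
    rw [archInv, hset, csInf_Icc ht.2]
  have harch : ∀ t ∈ Ioc (0:ℝ) 1,
      archimedean φ (Function.update u i0 t) = archInv φ ((φ t).toReal + y) := by
    intro t ht
    have htop : φ t ≠ ⊤ := (hfin t ht).ne
    have hofr : ENNReal.ofReal ((φ t).toReal + y) = φ t + Y := by
      rw [ENNReal.ofReal_add ENNReal.toReal_nonneg ENNReal.toReal_nonneg,
          ENNReal.ofReal_toReal htop, ENNReal.ofReal_toReal hYne]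
    rw [archimedean, archInv, hsum t, hofr]
  have hT : Tendsto (fun t : ℝ => (φ t).toReal) (𝓝[>] (0:ℝ)) atTop := by
    rw [tendsto_atTop]
    intro M
    have h1 : ∀ᶠ t in 𝓝[>] (0:ℝ), φ t ∈ Ioi (ENNReal.ofReal M) :=
      hinfty (Ioi_mem_nhds (ENNReal.ofReal_lt_top))
    have h2 : ∀ᶠ t in 𝓝[>] (0:ℝ), t ∈ Ioo (0:ℝ) 1 :=
      Ioo_mem_nhdsGT_of_mem ⟨le_refl 0, one_pos⟩
    filter_upwards [h1, h2] with t ht1 ht2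
    have htop : φ t ≠ ⊤ := (hfin t ⟨ht2.1, ht2.2.le⟩).ne
    exact (ENNReal.ofReal_le_iff_le_toReal htop).mp (le_of_lt ht1)
  have hcomp : Tendsto (fun t : ℝ =>
      archInv φ ((φ t).toReal + y) / archInv φ ((φ t).toReal)) (𝓝[>] (0:ℝ)) (𝓝 1) :=
    (hlongtail y).comp hT
  refine hcomp.congr' ?_
  filter_upwards [Ioo_mem_nhdsGT_of_mem (show (0:ℝ) ∈ Ico (0:ℝ) 1 from ⟨le_refl 0, one_pos⟩)]
    with t ht
  have ht' : t ∈ Ioc (0:ℝ) 1 := ⟨ht.1, ht.2.le⟩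
  rw [harch t ht', hinv t ht']


/-- **Example 3 (Archimedean copulas), continued.** If the generator `φ` satisfies
`φ(0+) = ∞` and `φ⁻¹` is long-tailed, then `C(u₁, u₂, …, u_d)/u₁ → 1` as `u₁ ↓ 0`, for every
fixed `(u₂, …, u_d) ∈ (0,1]^{d−1}`. -/
theorem archimedean_long_tailed_limit
    (d : ℕ) (hd : 2 ≤ d)
    (φ : ℝ → ℝ≥0∞)
    -- φ : [0,1] → [0,∞] is convex, strictly decreasing, continuous, φ(1) = 0,
    -- finite on (0,1], and lim_{u↓0} φ(u) = ∞
    (hφ1 : φ 1 = 0)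
    (hfin : ∀ u ∈ Ioc (0 : ℝ) 1, φ u < ⊤)
    (hanti : StrictAntiOn φ (Icc (0 : ℝ) 1))
    (hcont : ContinuousOn φ (Icc (0 : ℝ) 1))
    (hconv : ConvexOn ℝ (Ioc (0 : ℝ) 1) (fun u => (φ u).toReal))
    (hinfty : Tendsto φ (𝓝[>] (0 : ℝ)) (𝓝 ⊤))
    -- φ⁻¹ is long-tailed: φ⁻¹(x+y)/φ⁻¹(x) → 1 as x → ∞, for every y
    (hlongtail : ∀ y : ℝ,
      Tendsto (fun x : ℝ => archInv φ (x + y) / archInv φ x) atTop (𝓝 1)) :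
    ∀ u : Fin d → ℝ, (∀ j : Fin d, j ≠ ⟨0, by omega⟩ → u j ∈ Ioc (0 : ℝ) 1) →
      Tendsto (fun t : ℝ => archimedean φ (Function.update u ⟨0, by omega⟩ t) / t)
        (𝓝[>] 0) (𝓝 1) := by
  intro u hu
  exact aux_arch d φ hfin hanti hinfty hlongtail ⟨0, by omega⟩ u hu

end
end

section
/- Let Δ_{d−1} = {w ∈ [0,1]^d : w_1 + ⋯ + w_d = 1} and let H be a non-negative finite Borel measure on Δ_{d−1} satisfying ∫ w_j H(dw) = 1 for all j ∈ {1,…,d}. Define ℓ(x) = ∫_{Δ_{d−1}} max_{j} (w_j x_j) H(dw) and the extreme-value copula C(u) = exp( −ℓ(−log u_1, …, −log u_d) ) for u ∈ (0,1]^d, extended by C(u) = 0 whenever u_j = 0 for some j. Assume that for every j ∈ {1,…,d} the partial derivative ℓ̇_j of ℓ with respect to x_j exists and is continuous on {x ∈ [0,∞)^d : x_j > 0}. Then for every j ∈ {1,…,d}, the first-order partial derivative Ċ_j of C exists and is continuous on V_{d,j} = {u ∈ [0,1]^d : 0 < u_j < 1}, with Ċ_j(u) = (C(u)/u_j) ·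 ℓ̇_j(−log u_1, …, −log u_d) if u_i > 0 for all i, and Ċ_j(u) = 0 if u_i = 0 for some i ≠ j; in particular, C satisfies Condition 1. -/
open MeasureTheory Filter Set
open scoped ENNReal Topology

noncomputable section

/-- The tail dependence function `ℓ(x) = ∫_{Δ_{d−1}} max_j (w_j x_j) H(dw)` of a spectral
measure `H` on the unit simplex. -/
def tailDepFun {d : ℕ} (H : Measure (Fin d → ℝ)) (x : Fin d → ℝ) : ℝ :=
  ∫ w, (⨆ j, w j * x j) ∂H

/-- The extreme-value copula `C(u) = exp(−ℓ(−log u₁, …, −log u_d))` on `(0,1]^d`, extended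
by `C(u) = 0` whenever some coordinate vanishes. -/
def evCopula {d : ℕ} (H : Measure (Fin d → ℝ)) (u : Fin d → ℝ) : ℝ :=
  if ∀ j, 0 < u j then Real.exp (-(tailDepFun H fun j => -Real.log (u j))) else 0

section Aux

variable {d : ℕ} [Nonempty (Fin d)] (H : Measure (Fin d → ℝ)) [IsFiniteMeasure H]

lemma abs_ciSup_sub (f g : Fin d → ℝ) {c : ℝ} (h : ∀ i, |f i - g i| ≤ c) :
    |(⨆ i, f i) - ⨆ i, g i| ≤ c := by
  have bf : BddAbove (range f) := (finite_range f).bddAbove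
  have bg : BddAbove (range g) := (finite_range g).bddAbove
  rw [abs_sub_le_iff]
  constructor
  · rw [sub_le_iff_le_add]
    exact ciSup_le fun i =>
      (sub_le_iff_le_add.1 ((abs_sub_le_iff.1 (h i)).1)).trans
        (add_le_add le_rfl (le_ciSup bg i))
  · rw [sub_le_iff_le_add]
    exact ciSup_le fun i =>
      (sub_le_iff_le_add.1 ((abs_sub_le_iff.1 (h i)).2)).trans
        (add_le_add le_rfl (le_ciSup bf i))

lemma sup_abs_bound {w x : Fin d → ℝ} (hw : w ∈ Icc (0 : Fin d → ℝ) 1) :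
    |⨆ j, w j * x j| ≤ ‖x‖ := by
  have hb : ∀ j, |w j * x j| ≤ ‖x‖ := fun j => by
    rw [abs_mul]
    calc |w j| * |x j| ≤ 1 * |x j| := by
          apply mul_le_mul_of_nonneg_right _ (abs_nonneg _)
          rw [abs_of_nonneg (hw.1 j)]; exact hw.2 j
      _ = |x j| := one_mul _
      _ ≤ ‖x‖ := by rw [← Real.norm_eq_abs]; exact norm_le_pi_norm x j
  rw [abs_le]
  constructor
  · obtain ⟨j⟩ := ‹Nonempty (Fin d)›
    exact le_trans (neg_le_of_abs_le (hb j)) (le_ciSup (f := fun j => w j * x j) ((finite_range _).bddAbove) j)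
  · exact ciSup_le fun j => le_of_abs_le (hb j)

lemma integrable_sup (hae : ∀ᵐ w ∂H, w ∈ Icc (0 : Fin d → ℝ) 1) (x : Fin d → ℝ) :
    Integrable (fun w => ⨆ j, w j * x j) H := by
  refine (integrable_const ‖x‖).mono' ?_ ?_
  · exact (Measurable.iSup fun j => (measurable_pi_apply j).mul_const (x j)).aestronglyMeasurable
  · exact hae.mono fun w hw => by rw [Real.norm_eq_abs]; exact sup_abs_bound hw

lemma integrable_eval (hae : ∀ᵐ w ∂H, w ∈ Icc (0 : Fin d → ℝ) 1) (i : Fin d) :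
    Integrable (fun w => w i) H := by
  refine (integrable_const (1 : ℝ)).mono' (measurable_pi_apply i).aestronglyMeasurable ?_
  exact hae.mono fun w hw => by
    rw [Real.norm_eq_abs, abs_of_nonneg (hw.1 i)]; exact hw.2 i

lemma tailDep_sub_le (hae : ∀ᵐ w ∂H, w ∈ Icc (0 : Fin d → ℝ) 1) (x y : Fin d → ℝ) {c : ℝ}
    (hxy : ∀ i, |x i - y i| ≤ c) :
    |tailDepFun H x - tailDepFun H y| ≤ (H univ).toReal * c := by
  have ix := integrable_sup H hae x
  have iy := integrable_sup H hae y
  rw [tailDepFun, tailDepFun, ← integral_sub ix iy, ← Real.norm_eq_abs, mul_comm]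
  refine norm_integral_le_of_norm_le_const ?_
  refine hae.mono fun w hw => ?_
  rw [Real.norm_eq_abs]
  refine abs_ciSup_sub _ _ fun i => ?_
  rw [← mul_sub, abs_mul, abs_of_nonneg (hw.1 i)]
  calc w i * |x i - y i| ≤ 1 * c :=
        mul_le_mul (hw.2 i) (hxy i) (abs_nonneg _) zero_le_one
    _ = c := one_mul c

lemma tailDep_continuous (hae : ∀ᵐ w ∂H, w ∈ Icc (0 : Fin d → ℝ) 1) :
    Continuous (tailDepFun H) := by
  refine (LipschitzWith.of_dist_le_mul (K := (H univ).toReal.toNNReal) fun x y => ?_).continuous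
  rw [Real.dist_eq]
  calc |tailDepFun H x - tailDepFun H y| ≤ (H univ).toReal * dist x y :=
        tailDep_sub_le H hae x y fun i => by
          rw [← Real.dist_eq]; exact dist_le_pi_dist x y i
    _ ≤ (H univ).toReal.toNNReal * dist x y := by
        apply mul_le_mul_of_nonneg_right _ dist_nonneg
        exact Real.le_coe_toNNReal _

lemma eval_le_tailDep (hae : ∀ᵐ w ∂H, w ∈ Icc (0 : Fin d → ℝ) 1)
    (hmom : ∀ j : Fin d, ∫ w, w j ∂H = 1) (x : Fin d → ℝ) (i : Fin d) :
    x i ≤ tailDepFun H x := by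
  have h1 : ∫ w, w i * x i ∂H = x i := by
    rw [integral_mul_const, hmom i, one_mul]
  rw [← h1, tailDepFun]
  refine integral_mono ((integrable_eval H hae i).mul_const (x i)) (integrable_sup H hae x)
    fun w => le_ciSup (f := fun j => w j * x j) ((finite_range _).bddAbove) i

lemma ld_bound {φ : ℝ → ℝ} {D a M : ℝ}
    (h1 : HasDerivAt φ D a) (hlip : ∀ t, |φ t - φ a| ≤ M * |t - a|) : |D| ≤ M := by
  have hs := hasDerivAt_iff_tendsto_slope.1 h1
  refine le_of_tendsto hs.abs ?_
  filter_upwards [self_mem_nhdsWithin] with t ht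
  have hta : t - a ≠ 0 := sub_ne_zero.2 ht
  rw [slope_def_field, div_eq_mul_inv, abs_mul, abs_inv, ← div_eq_mul_inv,
    div_le_iff₀ (abs_pos.2 hta)]
  exact hlip t

end Aux



/-- **Example 4 (extreme-value copulas).** If every first-order partial derivative `ℓ̇_j` of
the tail dependence function exists and is continuous on `{x ∈ [0,∞)^d : x_j > 0}`, then the
extreme-value copula `C` satisfies Condition 1, with
`Ċ_j(u) = (C(u)/u_j) ℓ̇_j(−log u₁, …, −log u_d)` if all `u_i > 0`, and `Ċ_j(u) = 0` if
`u_i = 0` for some `i ≠ j`. -/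
theorem evCopula_condition_one
    (d : ℕ) (hd : 1 ≤ d)
    (H : Measure (Fin d → ℝ)) [IsFiniteMeasure H]
    -- H is concentrated on the unit simplex Δ_{d−1}
    (hsupp : H {w : Fin d → ℝ | ¬ (w ∈ Icc (0 : Fin d → ℝ) 1 ∧ ∑ j, w j = 1)} = 0)
    -- the d moment constraints
    (hmom : ∀ j : Fin d, ∫ w, w j ∂H = 1)
    -- partial derivatives of ℓ exist and are continuous on {x ∈ [0,∞)^d : x_j > 0}
    (ld : Fin d → (Fin d → ℝ) → ℝ)
    (hld : ∀ (j : Fin d) (x : Fin d → ℝ), x ∈ Ici (0 : Fin d → ℝ) → 0 < x j →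
      HasDerivAt (fun t => tailDepFun H (Function.update x j t)) (ld j x) (x j))
    (hldcont : ∀ j : Fin d,
      ContinuousOn (ld j) {x : Fin d → ℝ | x ∈ Ici (0 : Fin d → ℝ) ∧ 0 < x j}) :
    ∃ Cdot : Fin d → (Fin d → ℝ) → ℝ, ∀ j : Fin d,
      (∀ u : Fin d → ℝ, u ∈ Icc 0 1 → 0 < u j → u j < 1 →
        HasDerivAt (fun t => evCopula H (Function.update u j t)) (Cdot j u) (u j)) ∧
      ContinuousOn (Cdot j) {u : Fin d → ℝ | u ∈ Icc 0 1 ∧ 0 < u j ∧ u j < 1} ∧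
      (∀ u : Fin d → ℝ, u ∈ Icc 0 1 → 0 < u j → u j < 1 →
        ((∀ i, 0 < u i) →
          Cdot j u = evCopula H u / u j * ld j (fun i => -Real.log (u i))) ∧
        ((∃ i : Fin d, i ≠ j ∧ u i = 0) → Cdot j u = 0)) := by
  haveI : Nonempty (Fin d) := ⟨⟨0, hd⟩⟩
  have hae : ∀ᵐ w ∂H, w ∈ Icc (0 : Fin d → ℝ) 1 := by
    rw [ae_iff]
    refine measure_mono_null (fun w hw => ?_) hsupp
    exact fun hc => hw hc.1
  set M := (H univ).toReal with hMdef
  have hM0 : 0 ≤ M := ENNReal.toReal_nonneg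
  -- uniform bound on the partial derivatives of ℓ
  have hldb : ∀ (j : Fin d) (x : Fin d → ℝ), x ∈ Ici (0 : Fin d → ℝ) → 0 < x j →
      |ld j x| ≤ M := by
    intro j x hx hxj
    refine ld_bound (hld j x hx hxj) fun t => ?_
    have h := tailDep_sub_le H hae (Function.update x j t) (Function.update x j (x j))
      (c := |t - x j|) (fun i => by
        by_cases hij : i = j
        · subst hij; simp
        · simp [Function.update_of_ne hij])
    rw [hMdef, Function.update_eq_self j x]
    rwa [Function.update_eq_self j x] at h
  classical
  set Cd : Fin d → (Fin d → ℝ) → ℝ := fun j u =>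
    if ∀ i, 0 < u i then evCopula H u / u j * ld j (fun i => -Real.log (u i)) else 0
    with hCddef
  have hCdpos : ∀ (j : Fin d) (u : Fin d → ℝ), (∀ i, 0 < u i) →
      Cd j u = evCopula H u / u j * ld j (fun i => -Real.log (u i)) := fun j u h => if_pos h
  have hCdneg : ∀ (j : Fin d) (u : Fin d → ℝ), ¬(∀ i, 0 < u i) → Cd j u = 0 :=
    fun j u h => if_neg h
  have hCdzero : ∀ (j : Fin d) (u : Fin d → ℝ) (i : Fin d), u i = 0 → Cd j u = 0 :=
    fun j u i hi => hCdneg j u fun hall => by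
      have := hall i; rw [hi] at this; exact lt_irrefl 0 this
  refine ⟨Cd, fun j => ⟨?_, ?_, ?_⟩⟩
  · -- derivatives
    intro u hu huj huj1
    by_cases hpos : ∀ i, 0 < u i
    · rw [hCdpos j u hpos]
      set x : Fin d → ℝ := fun i => -Real.log (u i) with hxdef
      have hx0 : x ∈ Ici (0 : Fin d → ℝ) :=
        fun i => neg_nonneg.2 (Real.log_nonpos (hu.1 i) (hu.2 i))
      have hxj : 0 < x j := neg_pos.2 (Real.log_neg huj huj1)
      have h1 := hld j x hx0 hxj
      have hlog : HasDerivAt (fun t : ℝ => -Real.log t) (-(u j)⁻¹) (u j) :=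
        (Real.hasDerivAt_log (ne_of_gt huj)).neg
      have hcomp := HasDerivAt.comp (u j) h1 hlog
      have hexp := (hcomp.neg).exp
      simp only [Function.comp_def, Pi.neg_apply] at hexp
      rw [show Function.update x j (-Real.log (u j)) = x from Function.update_eq_self j x]
        at hexp
      have hev : (fun t => evCopula H (Function.update u j t)) =ᶠ[𝓝 (u j)]
          (fun t => Real.exp (-(tailDepFun H (Function.update x j (-Real.log t))))) := by
        filter_upwards [eventually_gt_nhds huj] with t ht
        have hupos : ∀ i, 0 < Function.update u j t i := by
          intro i
          by_cases hij : i = j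
          · subst hij; simpa using ht
          · simpa [Function.update_of_ne hij] using hpos i
        have hxx : (fun i => -Real.log (Function.update u j t i))
            = Function.update x j (-Real.log t) := by
          funext i
          by_cases hij : i = j
          · subst hij; simp
          · simp [Function.update_of_ne hij, hxdef]
        rw [evCopula, if_pos hupos, hxx]
      have hval : evCopula H u / u j * ld j x
          = Real.exp (-(tailDepFun H x)) * (-(ld j x * -(u j)⁻¹)) := by
        rw [evCopula, if_pos hpos, hxdef]
        ring
      rw [hval]
      exact hexp.congr_of_eventuallyEq hev
    · have hiz : ∃ i, i ≠ j ∧ u i = 0 := by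
        push_neg at hpos
        obtain ⟨i, hi⟩ := hpos
        have hi0 : u i = 0 := le_antisymm hi (hu.1 i)
        exact ⟨i, fun h => absurd huj (not_lt.2 (h ▸ hi)), hi0⟩
      obtain ⟨i, hij, hi0⟩ := hiz
      have hzero : (fun t => evCopula H (Function.update u j t)) = fun _ => (0 : ℝ) := by
        funext t
        rw [evCopula, if_neg]
        intro hall
        have := hall i
        rw [Function.update_of_ne hij, hi0] at this
        exact lt_irrefl 0 this
      rw [hCdzero j u i hi0, hzero]
      exact hasDerivAt_const _ _
  · -- continuity
    intro u₀ hu₀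
    obtain ⟨hu01, huj0, huj1⟩ := hu₀
    by_cases hpos : ∀ i, 0 < u₀ i
    · have hPev : ∀ᶠ u in 𝓝 u₀, ∀ i, 0 < u i := by
        rw [eventually_all]
        intro i
        exact ((continuous_apply i).continuousAt (x := u₀)).eventually
          (eventually_gt_nhds (hpos i))
      have hxcont : ContinuousAt (fun u : Fin d → ℝ => fun i => -Real.log (u i)) u₀ := by
        apply continuousAt_pi.2
        intro i
        have h1 : ContinuousAt (fun u : Fin d → ℝ => u i) u₀ := (continuous_apply i).continuousAt
        show ContinuousAt (fun u : Fin d → ℝ => -Real.log (u i)) u₀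
        exact (h1.log (ne_of_gt (hpos i))).neg
      have hmaps : MapsTo (fun u : Fin d → ℝ => fun i => -Real.log (u i))
          {u : Fin d → ℝ | u ∈ Icc 0 1 ∧ 0 < u j ∧ u j < 1}
          {x : Fin d → ℝ | x ∈ Ici (0 : Fin d → ℝ) ∧ 0 < x j} := by
        intro u hu
        exact ⟨fun i => neg_nonneg.2 (Real.log_nonpos (hu.1.1 i) (hu.1.2 i)),
          neg_pos.2 (Real.log_neg hu.2.1 hu.2.2)⟩
      have hldc : ContinuousWithinAt (fun u : Fin d → ℝ => ld j (fun i => -Real.log (u i)))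
          {u : Fin d → ℝ | u ∈ Icc 0 1 ∧ 0 < u j ∧ u j < 1} u₀ :=
        ((hldcont j) _ (hmaps ⟨⟨hu01.1, hu01.2⟩, huj0, huj1⟩)).comp
          hxcont.continuousWithinAt hmaps
      have hec : ContinuousAt
          (fun u : Fin d → ℝ => Real.exp (-(tailDepFun H (fun i => -Real.log (u i))))) u₀ :=
        Real.continuous_exp.continuousAt.comp
          (((tailDep_continuous H hae).continuousAt.comp hxcont).neg)
      have hg : ContinuousWithinAt (fun u : Fin d → ℝ =>
          Real.exp (-(tailDepFun H (fun i => -Real.log (u i)))) / u j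
            * ld j (fun i => -Real.log (u i)))
          {u : Fin d → ℝ | u ∈ Icc 0 1 ∧ 0 < u j ∧ u j < 1} u₀ :=
        ((hec.continuousWithinAt.div
          ((continuous_apply j).continuousAt.continuousWithinAt) (ne_of_gt huj0)).mul hldc)
      refine hg.congr_of_eventuallyEq ?_ ?_
      · refine (hPev.filter_mono nhdsWithin_le_nhds).mono fun u hu => ?_
        rw [hCdpos j u hu, evCopula, if_pos hu]
      · rw [hCdpos j u₀ hpos, evCopula, if_pos hpos]
    · push_neg at hpos
      obtain ⟨i, hi⟩ := hpos
      have hi0 : u₀ i = 0 := le_antisymm hi (hu01.1 i)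
      rw [ContinuousWithinAt, hCdzero j u₀ i hi0]
      have htend : Tendsto (fun u : Fin d → ℝ => u i * M / u j)
          (𝓝[{u : Fin d → ℝ | u ∈ Icc 0 1 ∧ 0 < u j ∧ u j < 1}] u₀) (𝓝 0) := by
        have h1 : Tendsto (fun u : Fin d → ℝ => u i * M / u j) (𝓝 u₀)
            (𝓝 (u₀ i * M / u₀ j)) :=
          (((continuous_apply i).continuousAt (x := u₀)).mul tendsto_const_nhds).div
            ((continuous_apply j).continuousAt (x := u₀)) (ne_of_gt huj0)
        rw [hi0, zero_mul, zero_div] at h1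
        exact h1.mono_left nhdsWithin_le_nhds
      refine squeeze_zero_norm' ?_ htend
      filter_upwards [self_mem_nhdsWithin] with u hu
      by_cases hall : ∀ k, 0 < u k
      · rw [hCdpos j u hall]
        have hle : evCopula H u ≤ u i := by
          rw [evCopula, if_pos hall]
          have h2 := eval_le_tailDep H hae hmom (fun k => -Real.log (u k)) i
          calc Real.exp (-(tailDepFun H fun k => -Real.log (u k)))
              ≤ Real.exp (-(-Real.log (u i))) := Real.exp_le_exp.2 (neg_le_neg h2)
            _ = u i := by rw [neg_neg, Real.exp_log (hall i)]
        have hepos : 0 ≤ evCopula H u := by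
          rw [evCopula, if_pos hall]; exact (Real.exp_pos _).le
        have hldsb : |ld j (fun k => -Real.log (u k))| ≤ M :=
          hldb j _ (fun k => neg_nonneg.2 (Real.log_nonpos (hu.1.1 k) (hu.1.2 k)))
            (neg_pos.2 (Real.log_neg hu.2.1 hu.2.2))
        rw [Real.norm_eq_abs, abs_mul, abs_div, abs_of_nonneg hepos,
          abs_of_pos hu.2.1]
        calc evCopula H u / u j * |ld j (fun k => -Real.log (u k))|
            ≤ u i / u j * M := by
              apply mul_le_mul _ hldsb (abs_nonneg _) _
              · exact (div_le_div_iff_of_pos_right hu.2.1).2 hle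
              · exact div_nonneg (hu.1.1 i) hu.2.1.le
          _ = u i * M / u j := by ring
      · rw [hCdneg j u hall, norm_zero]
        exact div_nonneg (mul_nonneg (hu.1.1 i) hM0) hu.2.1.le
  · -- formulas
    intro u hu huj huj1
    refine ⟨fun hall => hCdpos j u hall, ?_⟩
    rintro ⟨i, hij, hi0⟩
    exact hCdzero j u i hi0

end
end

section
/- Let A be a Pickands dependence function that is twice continuously differentiable on (0,1), and let C(u,v) = exp( log(uv) · A( log(v)/log(uv) ) ) for (u,v) ∈ (0,1)². Then for every (u,v) ∈ (0,1)², the mixed second-order partial derivative of C exists and equals ∂²C/∂u∂v (u,v) = ( C(u,v)/(u v) ) · ( μ(t) ν(t) − t(1−t) A″(t) / log(uv) ), where t = log(v)/log(uv) ∈ (0,1), μ(t) = A(t) − t A′(t), and ν(t) = A(t) + (1−t) A′(t). -/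
open Set Filter
open scoped Topology

noncomputable section

/-- The bivariate extreme-value copula `C(u,v) = exp(log(uv) · A(log v / log(uv)))`
associated with a Pickands dependence function `A`. -/
def evCopula2 (A : ℝ → ℝ) (u v : ℝ) : ℝ :=
  Real.exp (Real.log (u * v) * A (Real.log v / Real.log (u * v)))

/-- `t = log(v)/log(uv)`. -/
def pickT (u v : ℝ) : ℝ := Real.log v / Real.log (u * v)

/-- `μ(t) = A(t) − t A′(t)`. -/
def pickMu (A A' : ℝ → ℝ) (t : ℝ) : ℝ := A t - t * A' t

/-- `ν(t) = A(t) + (1−t) A′(t)`. -/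
def pickNu (A A' : ℝ → ℝ) (t : ℝ) : ℝ := A t + (1 - t) * A' t

/-- The claimed value of the mixed second-order partial derivative `∂²C/∂u∂v`:
`(C(u,v)/(uv)) (μ(t)ν(t) − t(1−t)A″(t)/log(uv))`. -/
def evMixedDeriv (A A' A'' : ℝ → ℝ) (u v : ℝ) : ℝ :=
  evCopula2 A u v / (u * v) *
    (pickMu A A' (pickT u v) * pickNu A A' (pickT u v) -
      pickT u v * (1 - pickT u v) * A'' (pickT u v) / Real.log (u * v))

section Aux

variable {A A' A'' : ℝ → ℝ} {u v : ℝ}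

lemma logL_neg (hu : u ∈ Ioo (0:ℝ) 1) (hv : v ∈ Ioo (0:ℝ) 1) :
    Real.log (u * v) < 0 :=
  Real.log_neg (mul_pos hu.1 hv.1) (by nlinarith [hu.1, hu.2, hv.1, hv.2])

lemma pickT_mem (hu : u ∈ Ioo (0:ℝ) 1) (hv : v ∈ Ioo (0:ℝ) 1) :
    pickT u v ∈ Ioo (0:ℝ) 1 := by
  have hlu : Real.log u < 0 := Real.log_neg hu.1 hu.2
  have hlv : Real.log v < 0 := Real.log_neg hv.1 hv.2
  have hL : Real.log (u * v) = Real.log u + Real.log v :=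
    Real.log_mul (ne_of_gt hu.1) (ne_of_gt hv.1)
  constructor
  · exact div_pos_of_neg_of_neg hlv (by rw [hL]; linarith)
  · rw [pickT, div_lt_one_iff]
    right; right
    exact ⟨by rw [hL]; linarith, by rw [hL]; linarith⟩

/-- derivative of `x ↦ log (x*v)` at `u`. -/
lemma hasDerivAt_logL_fst (hu0 : 0 < u) (hv0 : 0 < v) :
    HasDerivAt (fun x => Real.log (x * v)) (1 / u) u := by
  have h := (Real.hasDerivAt_log (ne_of_gt (mul_pos hu0 hv0))).comp u
    (hasDerivAt_mul_const (x := u) v)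
  refine h.congr_deriv (Eq.symm ?_)
  field_simp

/-- derivative of `y ↦ log (u*y)` at `v`. -/
lemma hasDerivAt_logL_snd (hu0 : 0 < u) (hv0 : 0 < v) :
    HasDerivAt (fun y => Real.log (u * y)) (1 / v) v := by
  have h := (Real.hasDerivAt_log (ne_of_gt (mul_pos hu0 hv0))).comp v
    ((hasDerivAt_id v).const_mul u)
  refine h.congr_deriv (Eq.symm ?_)
  field_simp

lemma hasDerivAt_pickT_fst (hu : u ∈ Ioo (0:ℝ) 1) (hv : v ∈ Ioo (0:ℝ) 1) :
    HasDerivAt (fun x => pickT x v)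
      (-(pickT u v) / (u * Real.log (u * v))) u := by
  have hLne : Real.log (u * v) ≠ 0 := ne_of_lt (logL_neg hu hv)
  have hu0 : u ≠ 0 := ne_of_gt hu.1
  have h := (hasDerivAt_const u (Real.log v)).div (hasDerivAt_logL_fst hu.1 hv.1) hLne
  refine h.congr_deriv (Eq.symm ?_)
  rw [pickT]
  ring

lemma hasDerivAt_pickT_snd (hu : u ∈ Ioo (0:ℝ) 1) (hv : v ∈ Ioo (0:ℝ) 1) :
    HasDerivAt (fun y => pickT u y)
      ((1 - pickT u v) / (v * Real.log (u * v))) v := by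
  have hLne : Real.log (u * v) ≠ 0 := ne_of_lt (logL_neg hu hv)
  have hv0 : v ≠ 0 := ne_of_gt hv.1
  have h := (Real.hasDerivAt_log (ne_of_gt hv.1)).div (hasDerivAt_logL_snd hu.1 hv.1) hLne
  refine h.congr_deriv (Eq.symm ?_)
  rw [pickT]
  linear_combination (-(v⁻¹ * (Real.log (u * v))⁻¹)) * mul_inv_cancel₀ hLne

/-- `∂C/∂u = C μ(t)/u`. -/
lemma hasDerivAt_C_fst (hu : u ∈ Ioo (0:ℝ) 1) (hv : v ∈ Ioo (0:ℝ) 1)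
    (hA' : ∀ t ∈ Ioo (0 : ℝ) 1, HasDerivAt A (A' t) t) :
    HasDerivAt (fun x => evCopula2 A x v)
      (evCopula2 A u v * pickMu A A' (pickT u v) / u) u := by
  have htm := pickT_mem hu hv
  have hLne : Real.log (u * v) ≠ 0 := ne_of_lt (logL_neg hu hv)
  have htd := hasDerivAt_pickT_fst hu hv
  have hAt : HasDerivAt (fun x => A (pickT x v))
      (A' (pickT u v) * (-(pickT u v) / (u * Real.log (u * v)))) u :=
    (hA' _ htm).comp u htd
  have hf := ((hasDerivAt_logL_fst hu.1 hv.1).mul hAt).exp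
  refine hf.congr_deriv (Eq.symm ?_)
  have hkey : Real.log (u * v) *
      (A' (pickT u v) * (-(pickT u v) / (u * Real.log (u * v)))) =
      -(pickT u v * A' (pickT u v)) / u := by
    linear_combination (-(pickT u v) * A' (pickT u v) * u⁻¹) * mul_inv_cancel₀ hLne
  rw [hkey, pickMu]
  show Real.exp (Real.log (u * v) * A (pickT u v)) *
      (A (pickT u v) - pickT u v * A' (pickT u v)) / u = _
  simp only [Pi.mul_apply]
  ring

/-- `∂C/∂v = C ν(t)/v`. -/
lemma hasDerivAt_C_snd (hu : u ∈ Ioo (0:ℝ) 1) (hv : v ∈ Ioo (0:ℝ) 1)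
    (hA' : ∀ t ∈ Ioo (0 : ℝ) 1, HasDerivAt A (A' t) t) :
    HasDerivAt (fun y => evCopula2 A u y)
      (evCopula2 A u v * pickNu A A' (pickT u v) / v) v := by
  have htm := pickT_mem hu hv
  have hLne : Real.log (u * v) ≠ 0 := ne_of_lt (logL_neg hu hv)
  have htd := hasDerivAt_pickT_snd hu hv
  have hAt : HasDerivAt (fun y => A (pickT u y))
      (A' (pickT u v) * ((1 - pickT u v) / (v * Real.log (u * v)))) v :=
    (hA' _ htm).comp v htd
  have hf := ((hasDerivAt_logL_snd hu.1 hv.1).mul hAt).exp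
  refine hf.congr_deriv (Eq.symm ?_)
  have hkey : Real.log (u * v) *
      (A' (pickT u v) * ((1 - pickT u v) / (v * Real.log (u * v)))) =
      (1 - pickT u v) * A' (pickT u v) / v := by
    linear_combination ((1 - pickT u v) * A' (pickT u v) * v⁻¹) * mul_inv_cancel₀ hLne
  rw [hkey, pickNu]
  show Real.exp (Real.log (u * v) * A (pickT u v)) *
      (A (pickT u v) + (1 - pickT u v) * A' (pickT u v)) / v = _
  simp only [Pi.mul_apply]
  ring

lemma hasDerivAt_mu_snd (hu : u ∈ Ioo (0:ℝ) 1) (hv : v ∈ Ioo (0:ℝ) 1)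
    (hA' : ∀ t ∈ Ioo (0 : ℝ) 1, HasDerivAt A (A' t) t)
    (hA'' : ∀ t ∈ Ioo (0 : ℝ) 1, HasDerivAt A' (A'' t) t) :
    HasDerivAt (fun y => pickMu A A' (pickT u y))
      (-(pickT u v) * A'' (pickT u v) *
        ((1 - pickT u v) / (v * Real.log (u * v)))) v := by
  have htm := pickT_mem hu hv
  have htd := hasDerivAt_pickT_snd hu hv
  have hAt : HasDerivAt (fun y => A (pickT u y))
      (A' (pickT u v) * ((1 - pickT u v) / (v * Real.log (u * v)))) v :=
    (hA' _ htm).comp v htd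
  have hA't : HasDerivAt (fun y => A' (pickT u y))
      (A'' (pickT u v) * ((1 - pickT u v) / (v * Real.log (u * v)))) v :=
    (hA'' _ htm).comp v htd
  have h := hAt.sub (htd.mul hA't)
  refine h.congr_deriv (Eq.symm ?_)
  ring

end Aux

/-- **Density formula for bivariate extreme-value copulas.** If the Pickands dependence
function `A` is twice continuously differentiable on `(0,1)`, then on `(0,1)²` the mixed
second-order partial derivative `∂²C/∂u∂v` of `C(u,v) = exp(log(uv)·A(log v/log(uv)))`
exists and equals `(C(u,v)/(uv)) (μ(t)ν(t) − t(1−t)A″(t)/log(uv))`. -/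
theorem evCopula2_mixed_second_deriv
    (A A' A'' : ℝ → ℝ)
    -- A is a Pickands dependence function
    (hconv : ConvexOn ℝ (Icc (0 : ℝ) 1) A)
    (hbounds : ∀ t ∈ Icc (0 : ℝ) 1, max t (1 - t) ≤ A t ∧ A t ≤ 1)
    -- A is twice continuously differentiable on (0,1)
    (hA' : ∀ t ∈ Ioo (0 : ℝ) 1, HasDerivAt A (A' t) t)
    (hA'' : ∀ t ∈ Ioo (0 : ℝ) 1, HasDerivAt A' (A'' t) t)
    (hA''cont : ContinuousOn A'' (Ioo (0 : ℝ) 1)) :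
    ∃ D : ℝ → ℝ → ℝ, ∀ u ∈ Ioo (0 : ℝ) 1, ∀ v ∈ Ioo (0 : ℝ) 1,
      HasDerivAt (fun x : ℝ => evCopula2 A x v) (D u v) u ∧
      HasDerivAt (fun y : ℝ => D u y) (evMixedDeriv A A' A'' u v) v := by
  refine ⟨fun u v => evCopula2 A u v * pickMu A A' (pickT u v) / u, fun u hu v hv => ?_⟩
  refine ⟨hasDerivAt_C_fst hu hv hA', ?_⟩
  have hLne : Real.log (u * v) ≠ 0 := ne_of_lt (logL_neg hu hv)
  have h := ((hasDerivAt_C_snd hu hv hA').mul (hasDerivAt_mu_snd hu hv hA' hA'')).div_const u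
  refine h.congr_deriv (Eq.symm ?_)
  rw [evMixedDeriv]
  ring

end
end

section
/- Let A be a Pickands dependence function that is twice continuously differentiable on (0,1) with M = sup_{0<t<1} t(1−t) A″(t) < ∞, and let C(u,v) = exp( log(uv) · A( log(v)/log(uv) ) ) for (u,v) ∈ (0,1)². Then for every (u,v) ∈ (0,1)², 0 ≤ ∂²C/∂u∂v (u,v) ≤ (1 + M) · min( 1/(u(1−u)), 1/(v(1−v)) ). -/
open Set Filter
open scoped Topology

noncomputable section

lemma aux_t_mem {u v : ℝ} (hu : u ∈ Ioo (0:ℝ) 1) (hv : v ∈ Ioo (0:ℝ) 1) :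
    Real.log v / Real.log (u * v) ∈ Ioo (0:ℝ) 1 := by
  have hlu : Real.log u < 0 := Real.log_neg hu.1 hu.2
  have hlv : Real.log v < 0 := Real.log_neg hv.1 hv.2
  have hL : Real.log (u * v) = Real.log u + Real.log v :=
    Real.log_mul hu.1.ne' hv.1.ne'
  rw [hL]
  constructor
  · exact div_pos_of_neg_of_neg hlv (by linarith)
  · rw [div_lt_one_of_neg (by linarith)]
    linarith

lemma hasDerivAt_ev_fst (A A' : ℝ → ℝ) {u v : ℝ}
    (hu : u ∈ Ioo (0:ℝ) 1) (hv : v ∈ Ioo (0:ℝ) 1)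
    (hA't : HasDerivAt A (A' (Real.log v / Real.log (u * v)))
      (Real.log v / Real.log (u * v))) :
    HasDerivAt (fun x : ℝ => evCopula2 A x v)
      (evCopula2 A u v / u *
        (A (Real.log v / Real.log (u * v)) -
          Real.log v / Real.log (u * v) * A' (Real.log v / Real.log (u * v)))) u := by
  obtain ⟨hu1, hu2⟩ := hu
  obtain ⟨hv1, hv2⟩ := hv
  have hu0 : u ≠ 0 := hu1.ne'
  have huv : u * v ≠ 0 := by positivity
  have hL0 : Real.log (u * v) ≠ 0 := by
    have : Real.log (u * v) < 0 :=
      Real.log_neg (by positivity) (by nlinarith)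
    exact this.ne
  have h1 : HasDerivAt (fun x : ℝ => x * v) v u := hasDerivAt_mul_const v
  have hL : HasDerivAt (fun x : ℝ => Real.log (x * v)) (v / (u * v)) u := h1.log huv
  have hT : HasDerivAt (fun x : ℝ => Real.log v / Real.log (x * v))
      ((0 * Real.log (u * v) - Real.log v * (v / (u * v))) / Real.log (u * v) ^ 2) u :=
    (hasDerivAt_const u (Real.log v)).div hL hL0
  have hAt := hA't.comp u hT
  have hmul := hL.mul hAt
  have hexp := hmul.exp
  unfold evCopula2
  refine hexp.congr_deriv ?_
  have hv0 : v ≠ 0 := hv1.ne'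
  simp only [Pi.mul_apply, Function.comp_apply]
  field_simp
  ring

lemma hasDerivAt_ev_snd (A A' A'' : ℝ → ℝ) {u v : ℝ}
    (hu : u ∈ Ioo (0:ℝ) 1) (hv : v ∈ Ioo (0:ℝ) 1)
    (hA't : HasDerivAt A (A' (Real.log v / Real.log (u * v)))
      (Real.log v / Real.log (u * v)))
    (hA''t : HasDerivAt A' (A'' (Real.log v / Real.log (u * v)))
      (Real.log v / Real.log (u * v))) :
    HasDerivAt (fun y : ℝ => evCopula2 A u y / u *
        (A (Real.log y / Real.log (u * y)) -
          Real.log y / Real.log (u * y) * A' (Real.log y / Real.log (u * y))))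
      (evCopula2 A u v / (u * v) *
        ((A (Real.log v / Real.log (u * v)) -
            Real.log v / Real.log (u * v) * A' (Real.log v / Real.log (u * v))) *
          (A (Real.log v / Real.log (u * v)) +
            (1 - Real.log v / Real.log (u * v)) * A' (Real.log v / Real.log (u * v))) -
          Real.log v / Real.log (u * v) * (1 - Real.log v / Real.log (u * v)) *
            A'' (Real.log v / Real.log (u * v)) / Real.log (u * v))) v := by
  obtain ⟨hu1, hu2⟩ := hu
  obtain ⟨hv1, hv2⟩ := hv
  have hu0 : u ≠ 0 := hu1.ne'
  have hv0 : v ≠ 0 := hv1.ne'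
  have huv : u * v ≠ 0 := by positivity
  have hLneg : Real.log (u * v) < 0 := Real.log_neg (by positivity) (by nlinarith)
  have hL0 : Real.log (u * v) ≠ 0 := hLneg.ne
  have h1 : HasDerivAt (fun y : ℝ => u * y) u v := by simpa using (hasDerivAt_id v).const_mul u
  have hL : HasDerivAt (fun y : ℝ => Real.log (u * y)) (u / (u * v)) v := h1.log huv
  have hlog : HasDerivAt Real.log v⁻¹ v := Real.hasDerivAt_log hv0
  have hT : HasDerivAt (fun y : ℝ => Real.log y / Real.log (u * y))
      ((v⁻¹ * Real.log (u * v) - Real.log v * (u / (u * v))) / Real.log (u * v) ^ 2) v :=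
    hlog.div hL hL0
  have hAt := hA't.comp v hT
  have hA't2 := hA''t.comp v hT
  have hmu := hAt.sub (hT.mul hA't2)
  have hg := hL.mul hAt
  have hC := hg.exp
  have hfin := (hC.div_const u).mul hmu
  unfold evCopula2
  refine hfin.congr_deriv ?_
  have hlv : Real.log v = (Real.log v / Real.log (u * v)) * Real.log (u * v) := by
    field_simp
  simp only [Pi.sub_apply, Pi.mul_apply, Function.comp_apply]
  field_simp
  ring

lemma A''_nonneg (A A' A'' : ℝ → ℝ) (hconv : ConvexOn ℝ (Icc (0:ℝ) 1) A)
    (hA' : ∀ t ∈ Ioo (0:ℝ) 1, HasDerivAt A (A' t) t)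
    (hA'' : ∀ t ∈ Ioo (0:ℝ) 1, HasDerivAt A' (A'' t) t) :
    ∀ t ∈ Ioo (0:ℝ) 1, 0 ≤ A'' t := by
  intro t ht
  have htend : Tendsto (slope A' t) (𝓝[>] t) (𝓝 (A'' t)) :=
    ((hasDerivAt_iff_tendsto_slope).mp (hA'' t ht)).mono_left
      (nhdsWithin_mono t (fun x hx => ne_of_gt hx))
  refine ge_of_tendsto htend ?_
  filter_upwards [Ioo_mem_nhdsGT_of_mem ⟨le_refl t, ht.2⟩] with s hs
  have hs01 : s ∈ Ioo (0:ℝ) 1 := ⟨ht.1.trans hs.1, hs.2⟩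
  have htI : t ∈ Icc (0:ℝ) 1 := ⟨ht.1.le, ht.2.le⟩
  have hsI : s ∈ Icc (0:ℝ) 1 := ⟨hs01.1.le, hs01.2.le⟩
  have h1 : A' t ≤ slope A t s :=
    hconv.le_slope_of_hasDerivAt htI hsI hs.1 (hA' t ht)
  have h2 : slope A t s ≤ A' s :=
    hconv.slope_le_of_hasDerivAt htI hsI hs.1 (hA' s hs01)
  rw [slope_def_field]
  apply div_nonneg (by linarith) (by linarith [hs.1])

lemma arith_step {a K M Cf br : ℝ} (ha0 : 0 < a) (ha1 : a < 1) (hK : 0 < K)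
    (haK : 1 - a ≤ K) (hM : 0 ≤ M) (hCf : 0 ≤ Cf) (hCfa : Cf ≤ 1 / a)
    (hbr0 : 0 ≤ br) (hbr : br ≤ 1 + M / K) : Cf * br ≤ (1 + M) / (a * (1 - a)) := by
  have h1 : Cf * br ≤ (1 / a) * (1 + M / K) := mul_le_mul hCfa hbr hbr0 (by positivity)
  have hdiv : M / K * (1 - a) ≤ M := by
    rw [div_mul_eq_mul_div, div_le_iff₀ hK]
    nlinarith
  have h2 : (1 + M / K) * (1 - a) ≤ 1 + M := by nlinarith
  have h3 : (1 + M) / (a * (1 - a)) = (1 / a) * ((1 + M) / (1 - a)) := by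
    field_simp
  calc Cf * br ≤ (1 / a) * (1 + M / K) := h1
    _ ≤ (1 + M) / (a * (1 - a)) := by
        rw [h3]
        exact mul_le_mul_of_nonneg_left ((le_div_iff₀ (by linarith)).mpr h2) (by positivity)

set_option maxHeartbeats 1000000 in
/-- **Bound on the extreme-value copula density.** If `A` is twice continuously
differentiable on `(0,1)` with `t(1−t)A″(t) ≤ M` on `(0,1)`, then on `(0,1)²` the mixed
second-order partial derivative `∂²C/∂u∂v` satisfies
`0 ≤ ∂²C/∂u∂v ≤ (1+M) min(1/(u(1−u)), 1/(v(1−v)))`. -/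
theorem evCopula2_mixed_second_deriv_bound
    (A A' A'' : ℝ → ℝ)
    -- A is a Pickands dependence function
    (hconv : ConvexOn ℝ (Icc (0 : ℝ) 1) A)
    (hbounds : ∀ t ∈ Icc (0 : ℝ) 1, max t (1 - t) ≤ A t ∧ A t ≤ 1)
    -- A is twice continuously differentiable on (0,1)
    (hA' : ∀ t ∈ Ioo (0 : ℝ) 1, HasDerivAt A (A' t) t)
    (hA'' : ∀ t ∈ Ioo (0 : ℝ) 1, HasDerivAt A' (A'' t) t)
    (hA''cont : ContinuousOn A'' (Ioo (0 : ℝ) 1))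
    -- M = sup_{0<t<1} t(1−t)A″(t) < ∞
    (M : ℝ) (hM : ∀ t ∈ Ioo (0 : ℝ) 1, t * (1 - t) * A'' t ≤ M) :
    ∀ D E : ℝ → ℝ → ℝ,
      (∀ u ∈ Ioo (0 : ℝ) 1, ∀ v ∈ Ioo (0 : ℝ) 1,
        HasDerivAt (fun x : ℝ => evCopula2 A x v) (D u v) u) →
      (∀ u ∈ Ioo (0 : ℝ) 1, ∀ v ∈ Ioo (0 : ℝ) 1,
        HasDerivAt (fun y : ℝ => D u y) (E u v) v) →
      ∀ u ∈ Ioo (0 : ℝ) 1, ∀ v ∈ Ioo (0 : ℝ) 1,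
        0 ≤ E u v ∧
        E u v ≤ (1 + M) * min (1 / (u * (1 - u))) (1 / (v * (1 - v))) := by
  intro D E hD hE u hu v hv
  have hA''nn := A''_nonneg A A' A'' hconv hA' hA''
  -- Step 1: identify D
  have hDeq : ∀ u' ∈ Ioo (0:ℝ) 1, ∀ v' ∈ Ioo (0:ℝ) 1,
      D u' v' = evCopula2 A u' v' / u' *
        (A (Real.log v' / Real.log (u' * v')) -
          Real.log v' / Real.log (u' * v') * A' (Real.log v' / Real.log (u' * v'))) := by
    intro u' hu' v' hv'
    exact (hD u' hu' v' hv').unique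
      (hasDerivAt_ev_fst A A' hu' hv' (hA' _ (aux_t_mem hu' hv')))
  -- Step 2: identify E
  have ht : Real.log v / Real.log (u * v) ∈ Ioo (0:ℝ) 1 := aux_t_mem hu hv
  have hEv : HasDerivAt (fun y : ℝ => evCopula2 A u y / u *
      (A (Real.log y / Real.log (u * y)) -
        Real.log y / Real.log (u * y) * A' (Real.log y / Real.log (u * y))))
      (E u v) v := by
    refine (hE u hu v hv).congr_of_eventuallyEq ?_
    filter_upwards [Ioo_mem_nhds hv.1 hv.2] with y hy
    exact (hDeq u hu y hy).symm
  have hEeq : E u v = evCopula2 A u v / (u * v) *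
      ((A (Real.log v / Real.log (u * v)) -
          Real.log v / Real.log (u * v) * A' (Real.log v / Real.log (u * v))) *
        (A (Real.log v / Real.log (u * v)) +
          (1 - Real.log v / Real.log (u * v)) * A' (Real.log v / Real.log (u * v))) -
        Real.log v / Real.log (u * v) * (1 - Real.log v / Real.log (u * v)) *
          A'' (Real.log v / Real.log (u * v)) / Real.log (u * v)) :=
    hEv.unique (hasDerivAt_ev_snd A A' A'' hu hv (hA' _ ht) (hA'' _ ht))
  -- notation
  obtain ⟨hu1, hu2⟩ := hu
  obtain ⟨hv1, hv2⟩ := hv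
  set t := Real.log v / Real.log (u * v) with htdef
  set L := Real.log (u * v) with hLdef
  have hlu : Real.log u < 0 := Real.log_neg hu1 hu2
  have hlv : Real.log v < 0 := Real.log_neg hv1 hv2
  have hLsum : L = Real.log u + Real.log v := Real.log_mul hu1.ne' hv1.ne'
  have hLneg : L < 0 := by rw [hLsum]; linarith
  have hK : (0:ℝ) < -L := by linarith
  have hLt : L * t = Real.log v := by
    rw [htdef]; exact mul_div_cancel₀ _ hLneg.ne
  -- Pickands facts at t
  have htI : t ∈ Icc (0:ℝ) 1 := ⟨ht.1.le, ht.2.le⟩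
  have hAt1 : A t ≤ 1 := (hbounds t htI).2
  have hAtt : t ≤ A t := le_trans (le_max_left _ _) (hbounds t htI).1
  have hAt1t : 1 - t ≤ A t := le_trans (le_max_right _ _) (hbounds t htI).1
  have hA0 : A 0 = 1 := by
    have h := hbounds 0 ⟨le_refl 0, zero_le_one⟩
    have : (1:ℝ) ≤ A 0 := by simpa using h.1
    linarith [h.2]
  have hA1 : A 1 = 1 := by
    have h := hbounds 1 ⟨zero_le_one, le_refl 1⟩
    have : (1:ℝ) ≤ A 1 := by simpa using h.1
    linarith [h.2]
  have hslope_up : A' t ≤ (1 - A t) / (1 - t) := by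
    have h := hconv.le_slope_of_hasDerivAt htI ⟨zero_le_one, le_refl 1⟩ ht.2 (hA' t ht)
    rwa [slope_def_field, hA1] at h
  have hslope_lo : (A t - 1) / t ≤ A' t := by
    have h := hconv.slope_le_of_hasDerivAt ⟨le_refl 0, zero_le_one⟩ htI ht.1 (hA' t ht)
    rwa [slope_def_field, hA0, sub_zero] at h
  have hnu_le : (1 - t) * A' t ≤ 1 - A t := by
    have := (le_div_iff₀ (by linarith [ht.2] : (0:ℝ) < 1 - t)).mp hslope_up
    linarith
  have hmu_le : A t - 1 ≤ t * A' t := by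
    have := (div_le_iff₀ ht.1).mp hslope_lo
    linarith
  have hA'le1 : A' t ≤ 1 := by
    have h1t : (0:ℝ) < 1 - t := by linarith [ht.2]
    nlinarith
  have hA'ge1 : -1 ≤ A' t := by nlinarith [ht.1]
  -- mu, nu in [0,1]
  have hmu0 : 0 ≤ A t - t * A' t := by nlinarith [ht.1]
  have hmu1 : A t - t * A' t ≤ 1 := by linarith
  have hnu0 : 0 ≤ A t + (1 - t) * A' t := by nlinarith [ht.2]
  have hnu1 : A t + (1 - t) * A' t ≤ 1 := by linarith
  have hA''t : 0 ≤ A'' t := hA''nn t ht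
  have htA''M : t * (1 - t) * A'' t ≤ M := hM t ht
  have hM0 : 0 ≤ M := by
    have h2 := hM (1/2) ⟨by norm_num, by norm_num⟩
    have h3 := hA''nn (1/2) ⟨by norm_num, by norm_num⟩
    have h4 : (0:ℝ) ≤ (1/2 : ℝ) * (1 - 1/2) * A'' (1/2) := by positivity
    linarith only [h2, h4]
  -- the factor C/(uv)
  have hCf : evCopula2 A u v / (u * v) = Real.exp (L * A t - L) := by
    rw [evCopula2, ← hLdef, ← htdef, Real.exp_sub, Real.exp_log (by positivity)]
  have hCf0 : 0 ≤ evCopula2 A u v / (u * v) := by rw [hCf]; positivity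
  have hLAt : L * A t ≤ Real.log v := by
    rw [← hLt]
    exact mul_le_mul_of_nonpos_left hAtt hLneg.le
  have hLAt' : L * A t ≤ Real.log u := by
    have h := mul_le_mul_of_nonpos_left hAt1t hLneg.le
    have : L * (1 - t) = Real.log u := by rw [mul_sub, hLt, mul_one, hLsum]; ring
    linarith [this ▸ h]
  have hCfu : evCopula2 A u v / (u * v) ≤ 1 / u := by
    rw [hCf]
    have : L * A t - L ≤ -Real.log u := by linarith [hLAt, hLsum.le, hLsum.ge]
    calc Real.exp (L * A t - L) ≤ Real.exp (-Real.log u) := Real.exp_le_exp.mpr this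
      _ = 1 / u := by rw [Real.exp_neg, Real.exp_log hu1, one_div]
  have hCfv : evCopula2 A u v / (u * v) ≤ 1 / v := by
    rw [hCf]
    have : L * A t - L ≤ -Real.log v := by linarith [hLAt', hLsum.le, hLsum.ge]
    calc Real.exp (L * A t - L) ≤ Real.exp (-Real.log v) := Real.exp_le_exp.mpr this
      _ = 1 / v := by rw [Real.exp_neg, Real.exp_log hv1, one_div]
  -- the bracket
  set br := (A t - t * A' t) * (A t + (1 - t) * A' t) - t * (1 - t) * A'' t / L with hbrdef
  have hdivL : t * (1 - t) * A'' t / L = -(t * (1 - t) * A'' t / (-L)) := by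
    rw [div_neg, neg_neg]
  have hdivnn : 0 ≤ t * (1 - t) * A'' t / (-L) := by
    exact div_nonneg (mul_nonneg (mul_nonneg ht.1.le (by linarith [ht.2])) hA''t) hK.le
  have hbr0 : 0 ≤ br := by
    rw [hbrdef, hdivL]
    linarith [hdivnn, mul_nonneg hmu0 hnu0]
  have hbrle : br ≤ 1 + M / (-L) := by
    have h1 : (A t - t * A' t) * (A t + (1 - t) * A' t) ≤ 1 := by
      nlinarith [mul_nonneg hmu0 hnu0, mul_nonneg hmu0 (sub_nonneg.mpr hnu1)]
    have h2 : t * (1 - t) * A'' t / (-L) ≤ M / (-L) :=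
      (div_le_div_iff_of_pos_right hK).mpr htA''M
    rw [hbrdef, hdivL]
    linarith
  -- conclude
  rw [hEeq]
  constructor
  · exact mul_nonneg hCf0 hbr0
  · have h1u : 1 - u ≤ -L := by
      have := Real.log_le_sub_one_of_pos hu1
      rw [hLsum]; linarith
    have h1v : 1 - v ≤ -L := by
      have := Real.log_le_sub_one_of_pos hv1
      rw [hLsum]; linarith
    have hboundu := arith_step hu1 hu2 hK h1u hM0 hCf0 hCfu hbr0 hbrle
    have hboundv := arith_step hv1 hv2 hK h1v hM0 hCf0 hCfv hbr0 hbrle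
    rw [mul_min_of_nonneg _ _ (by linarith : (0:ℝ) ≤ 1 + M)]
    refine le_min ?_ ?_
    · rw [mul_one_div]; exact hboundu
    · rw [mul_one_div]; exact hboundv


end
end

section
/- Let A be a Pickands dependence function that is twice continuously differentiable on (0,1) with M = sup_{0<t<1} t(1−t) A″(t) < ∞, and let C(u,v) = exp( log(uv) · A( log(v)/log(uv) ) ) for (u,v) ∈ (0,1)². Then for every (u,v) ∈ (0,1)², the second-order partial derivative ∂²C/∂u² exists and equals ∂²C/∂u² (u,v) = ( C(u,v)/u² ) · ( −μ(t)(1 − μ(t)) + t²(1−t) A″(t)/log(u) ), with t = log(v)/log(uv) and μ(t) = A(t) − t A′(t), and it satisfies 0 ≤ −∂²C/∂u² (u,v) ≤ (1 + M) / ( u(1−u) ); moreover, for each fixed u ∈ (0,1), ∂²C/∂u² (u,v) → 0 as v ↓ 0 and as v ↑ 1. -/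
open Set Filter
open scoped Topology

noncomputable section

/-- The claimed value of the second-order partial derivative `∂²C/∂u²`:
`(C(u,v)/u²) (−μ(t)(1−μ(t)) + t²(1−t)A″(t)/log u)`. -/
def evSecondUU (A A' A'' : ℝ → ℝ) (u v : ℝ) : ℝ :=
  evCopula2 A u v / u ^ 2 *
    (-(pickMu A A' (pickT u v) * (1 - pickMu A A' (pickT u v))) +
      pickT u v ^ 2 * (1 - pickT u v) * A'' (pickT u v) / Real.log u)

section Aux

variable {A A' A'' : ℝ → ℝ} {u v M : ℝ}

lemma pick_basic (hu : u ∈ Ioo (0:ℝ) 1) (hv : v ∈ Ioo (0:ℝ) 1) :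
    Real.log (u * v) < 0 ∧ pickT u v ∈ Ioo (0:ℝ) 1 := by
  have hLu : Real.log u < 0 := Real.log_neg hu.1 hu.2
  have hLv : Real.log v < 0 := Real.log_neg hv.1 hv.2
  have hL : Real.log (u * v) = Real.log u + Real.log v :=
    Real.log_mul (ne_of_gt hu.1) (ne_of_gt hv.1)
  have hLneg : Real.log (u * v) < 0 := by rw [hL]; linarith
  have ht0 : 0 < pickT u v := div_pos_of_neg_of_neg hLv hLneg
  have ht1 : pickT u v < 1 := by
    rw [pickT, div_lt_one_of_neg hLneg, hL]; linarith
  exact ⟨hLneg, ht0, ht1⟩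

lemma logT_deriv (hu : 0 < u) (hv : 0 < v) (hLvne : Real.log v ≠ 0)
    (hLne : Real.log (u * v) ≠ 0) :
    HasDerivAt (fun x : ℝ => Real.log (x * v)) (1 / u) u ∧
    HasDerivAt (fun x : ℝ => pickT x v)
      (-pickT u v / (u * Real.log (u * v))) u := by
  have huv : u * v ≠ 0 := by positivity
  have hlog : HasDerivAt (fun x : ℝ => Real.log (x * v)) (v / (u * v)) u := by
    simpa using ((hasDerivAt_id u).mul_const v).log huv
  have hlog' : HasDerivAt (fun x : ℝ => Real.log (x * v)) (1 / u) u := by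
    convert hlog using 1; field_simp
  refine ⟨hlog', ?_⟩
  have hinv : HasDerivAt (fun x : ℝ => (Real.log (x * v))⁻¹)
      (-(1/u) / (Real.log (u * v)) ^ 2) u := hlog'.inv hLne
  have h2 := hinv.const_mul (Real.log v)
  have h3 : HasDerivAt (fun x : ℝ => pickT x v)
      (Real.log v * (-(1 / u) / Real.log (u * v) ^ 2)) u := by
    simpa [pickT, div_eq_mul_inv] using h2
  convert h3 using 1
  rw [pickT]; field_simp [hLne, hLvne, hu.ne']

lemma first_deriv (hA' : ∀ t ∈ Ioo (0 : ℝ) 1, HasDerivAt A (A' t) t)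
    (hu : u ∈ Ioo (0:ℝ) 1) (hv : v ∈ Ioo (0:ℝ) 1) :
    HasDerivAt (fun x : ℝ => evCopula2 A x v)
      (evCopula2 A u v * pickMu A A' (pickT u v) / u) u := by
  have hLu : Real.log u < 0 := Real.log_neg hu.1 hu.2
  have hLv : Real.log v < 0 := Real.log_neg hv.1 hv.2
  have hL : Real.log (u * v) = Real.log u + Real.log v :=
    Real.log_mul (ne_of_gt hu.1) (ne_of_gt hv.1)
  have hLneg : Real.log (u * v) < 0 := by rw [hL]; linarith
  have hLne : Real.log (u * v) ≠ 0 := ne_of_lt hLneg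
  obtain ⟨hlog, hT⟩ := logT_deriv hu.1 hv.1 (ne_of_lt hLv) hLne
  have ht0 : 0 < pickT u v := div_pos_of_neg_of_neg hLv hLneg
  have ht1 : pickT u v < 1 := by
    rw [pickT, div_lt_one_of_neg hLneg, hL]; linarith
  set t := pickT u v with htdef
  have hAt : HasDerivAt (fun x : ℝ => A (pickT x v))
      (A' t * (-t / (u * Real.log (u * v)))) u := (hA' t ⟨ht0, ht1⟩).comp u hT
  have hInner := hlog.mul hAt
  have hC := hInner.exp
  have hfun : (fun x : ℝ => evCopula2 A x v) =
      fun x : ℝ => Real.exp (Real.log (x * v) * A (pickT x v)) := by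
    funext x; rw [evCopula2, pickT]
  rw [hfun]
  convert hC using 1
  · rfl
  simp only [Pi.mul_apply]
  rw [evCopula2, pickMu, ← pickT, ← htdef]
  field_simp [hu.1.ne', hLne]
  ring

lemma second_deriv (hA' : ∀ t ∈ Ioo (0 : ℝ) 1, HasDerivAt A (A' t) t)
    (hA'' : ∀ t ∈ Ioo (0 : ℝ) 1, HasDerivAt A' (A'' t) t)
    (hu : u ∈ Ioo (0:ℝ) 1) (hv : v ∈ Ioo (0:ℝ) 1) :
    HasDerivAt (fun x : ℝ => evCopula2 A x v * pickMu A A' (pickT x v) / x)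
      (evSecondUU A A' A'' u v) u := by
  have hLu : Real.log u < 0 := Real.log_neg hu.1 hu.2
  have hLv : Real.log v < 0 := Real.log_neg hv.1 hv.2
  have hL : Real.log (u * v) = Real.log u + Real.log v :=
    Real.log_mul (ne_of_gt hu.1) (ne_of_gt hv.1)
  have hLneg : Real.log (u * v) < 0 := by rw [hL]; linarith
  have hLne : Real.log (u * v) ≠ 0 := ne_of_lt hLneg
  obtain ⟨hlog, hT⟩ := logT_deriv hu.1 hv.1 (ne_of_lt hLv) hLne
  have ht0 : 0 < pickT u v := div_pos_of_neg_of_neg hLv hLneg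
  have ht1 : pickT u v < 1 := by
    rw [pickT, div_lt_one_of_neg hLneg, hL]; linarith
  set t := pickT u v with htdef
  set td := -t / (u * Real.log (u * v)) with htddef
  have hC := first_deriv hA' hu hv
  have hAt : HasDerivAt (fun x : ℝ => A (pickT x v)) (A' t * td) u :=
    (hA' t ⟨ht0, ht1⟩).comp u hT
  have hA't : HasDerivAt (fun x : ℝ => A' (pickT x v)) (A'' t * td) u :=
    (hA'' t ⟨ht0, ht1⟩).comp u hT
  have hMu : HasDerivAt (fun x : ℝ => pickMu A A' (pickT x v))
      (A' t * td - (td * A' t + t * (A'' t * td))) u := by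
    have := hAt.sub (hT.mul hA't)
    exact this
  have hMu2 : HasDerivAt (fun x : ℝ => pickMu A A' (pickT x v))
      (t ^ 2 * A'' t / (u * Real.log (u * v))) u := by
    convert hMu using 1
    rw [htddef]
    field_simp [hu.1.ne', hLne]
    ring
  have hD := (hC.mul hMu2).div (hasDerivAt_id u) (ne_of_gt hu.1)
  have hD' : HasDerivAt (fun x : ℝ => evCopula2 A x v * pickMu A A' (pickT x v) / x)
      ((((evCopula2 A u v * pickMu A A' t / u) * pickMu A A' t +
        evCopula2 A u v * (t ^ 2 * A'' t / (u * Real.log (u * v)))) * u -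
        evCopula2 A u v * pickMu A A' t * 1) / u ^ 2) u := by
    exact hD
  convert hD' using 1
  have hlogu : Real.log u = (1 - t) * Real.log (u * v) := by
    rw [htdef, pickT]; field_simp; rw [hL]; ring
  have h1t : (1 : ℝ) - t ≠ 0 := by
    have := ht1; intro h; rw [htdef] at h; nlinarith [ht1]
  rw [evSecondUU, ← htdef, hlogu]
  field_simp [hu.1.ne', hLne]
  ring

lemma mu_bounds (hconv : ConvexOn ℝ (Icc (0 : ℝ) 1) A)
    (hbounds : ∀ t ∈ Icc (0 : ℝ) 1, max t (1 - t) ≤ A t ∧ A t ≤ 1)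
    (hA' : ∀ t ∈ Ioo (0 : ℝ) 1, HasDerivAt A (A' t) t)
    {t : ℝ} (ht : t ∈ Ioo (0 : ℝ) 1) :
    0 ≤ pickMu A A' t ∧ pickMu A A' t ≤ 1 ∧ 1 - pickMu A A' t ≤ 2 * t := by
  have htI : t ∈ Icc (0:ℝ) 1 := Ioo_subset_Icc_self ht
  have h0 : (0:ℝ) ∈ Icc (0:ℝ) 1 := by norm_num
  have h1 : (1:ℝ) ∈ Icc (0:ℝ) 1 := by norm_num
  have hA0 : A 0 = 1 := by
    have := hbounds 0 h0
    have h := this.1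
    simp only [sub_zero, max_eq_right (by norm_num : (0:ℝ) ≤ 1)] at h
    linarith [this.2]
  have hAt1 : A t ≤ 1 := (hbounds t htI).2
  have hAtt : t ≤ A t := le_trans (le_max_left _ _) (hbounds t htI).1
  have hAt1t : 1 - t ≤ A t := le_trans (le_max_right _ _) (hbounds t htI).1
  have hA1 : A 1 ≤ 1 := (hbounds 1 h1).2
  have hs1 : A' t ≤ slope A t 1 :=
    hconv.le_slope_of_hasDerivAt htI h1 ht.2 (hA' t ht)
  have hslope1 : slope A t 1 ≤ 1 := by
    rw [slope_def_field]
    rw [div_le_one (by linarith [ht.2] : (0:ℝ) < 1 - t)]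
    linarith [ht.2]
  have hA'le : A' t ≤ 1 := le_trans hs1 hslope1
  have hs0 : slope A 0 t ≤ A' t :=
    hconv.slope_le_of_hasDerivAt h0 htI ht.1 (hA' t ht)
  have hslope0 : (A t - 1) / t ≤ A' t := by
    rw [slope_def_field, hA0, sub_zero] at hs0; exact hs0
  have htA' : A t - 1 ≤ t * A' t := by
    rw [div_le_iff₀ ht.1] at hslope0; linarith [hslope0]
  constructor
  · rw [pickMu]
    nlinarith [ht.1, hA'le]
  constructor
  · rw [pickMu]; linarith [ht.2]
  · rw [pickMu]
    nlinarith [ht.1, hA'le]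

lemma App_nonneg (hconv : ConvexOn ℝ (Icc (0 : ℝ) 1) A)
    (hA' : ∀ t ∈ Ioo (0 : ℝ) 1, HasDerivAt A (A' t) t)
    (hA'' : ∀ t ∈ Ioo (0 : ℝ) 1, HasDerivAt A' (A'' t) t)
    {t : ℝ} (ht : t ∈ Ioo (0 : ℝ) 1) : 0 ≤ A'' t := by
  have hmono : ∀ z ∈ Ioo t 1, A' t ≤ A' z := by
    intro z hz
    have hzI : z ∈ Ioo (0:ℝ) 1 := ⟨lt_trans ht.1 hz.1, hz.2⟩
    have h1 : A' t ≤ slope A t z :=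
      hconv.le_slope_of_hasDerivAt (Ioo_subset_Icc_self ht) (Ioo_subset_Icc_self hzI)
        hz.1 (hA' t ht)
    have h2 : slope A t z ≤ A' z :=
      hconv.slope_le_of_hasDerivAt (Ioo_subset_Icc_self ht) (Ioo_subset_Icc_self hzI)
        hz.1 (hA' z hzI)
    linarith
  have htends : Tendsto (slope A' t) (𝓝[>] t) (𝓝 (A'' t)) := by
    rw [← hasDerivWithinAt_iff_tendsto_slope' (notMem_Ioi.2 le_rfl)]
    exact (hA'' t ht).hasDerivWithinAt
  refine ge_of_tendsto htends ?_
  filter_upwards [Ioo_mem_nhdsGT_of_mem ⟨le_refl t, ht.2⟩] with z hz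
  rw [slope_def_field]
  exact div_nonneg (by linarith [hmono z hz]) (by linarith [hz.1])

lemma key_bounds
    (htI : pickT u v ∈ Ioo (0:ℝ) 1)
    (hmu0 : 0 ≤ pickMu A A' (pickT u v)) (hmu1 : pickMu A A' (pickT u v) ≤ 1)
    (hmu2 : 1 - pickMu A A' (pickT u v) ≤ 2 * pickT u v)
    (hApp : 0 ≤ A'' (pickT u v))
    (hMt : pickT u v * (1 - pickT u v) * A'' (pickT u v) ≤ M)
    (hM0 : 0 ≤ M)
    (hAt : 1 - pickT u v ≤ A (Real.log v / Real.log (u * v)))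
    (hu : u ∈ Ioo (0:ℝ) 1) (hv : v ∈ Ioo (0:ℝ) 1) :
    0 ≤ -evSecondUU A A' A'' u v ∧
    -evSecondUU A A' A'' u v ≤ (1 + M) / (u * (1 - u)) ∧
    -evSecondUU A A' A'' u v ≤
      evCopula2 A u v / u ^ 2 * (1 + M * (-Real.log u)⁻¹) ∧
    -evSecondUU A A' A'' u v ≤
      pickT u v * ((2 + M * (-Real.log u)⁻¹) / u) := by
  have hu0 : 0 < u := hu.1
  have hu1 : u < 1 := hu.2
  have hLu : Real.log u < 0 := Real.log_neg hu.1 hu.2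
  have hLv : Real.log v < 0 := Real.log_neg hv.1 hv.2
  have hL : Real.log (u * v) = Real.log u + Real.log v :=
    Real.log_mul (ne_of_gt hu.1) (ne_of_gt hv.1)
  have hLneg : Real.log (u * v) < 0 := by rw [hL]; linarith
  have hLne : Real.log (u * v) ≠ 0 := ne_of_lt hLneg
  have hLupos : 0 < -Real.log u := by linarith
  set t := pickT u v with htdef
  set μ := pickMu A A' t with hmudef
  set C := evCopula2 A u v with hCdef
  have ht0 := htI.1
  have ht1 := htI.2
  have hCpos : 0 < C := by rw [hCdef, evCopula2]; exact Real.exp_pos _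
  have hlogu : Real.log u = (1 - t) * Real.log (u * v) := by
    rw [htdef, pickT]
    field_simp
    rw [hL]; ring
  have hCu : C ≤ u := by
    rw [hCdef, evCopula2]
    calc Real.exp (Real.log (u * v) * A (Real.log v / Real.log (u * v)))
        ≤ Real.exp (Real.log (u * v) * (1 - t)) := by
          apply Real.exp_le_exp.2
          exact mul_le_mul_of_nonpos_left hAt (le_of_lt hLneg)
      _ = u := by rw [mul_comm, ← hlogu, Real.exp_log hu.1]
  clear_value t μ C
  set B := μ * (1 - μ) + t ^ 2 * (1 - t) * A'' t * (-Real.log u)⁻¹ with hBdef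
  clear_value B
  have hLuinv : 0 < (-Real.log u)⁻¹ := inv_pos.2 hLupos
  have hE : -evSecondUU A A' A'' u v = C / u ^ 2 * B := by
    rw [evSecondUU, hBdef, ← htdef, ← hmudef, ← hCdef, inv_neg]
    ring
  have hCdivu : C / u ^ 2 ≤ 1 / u := by
    rw [div_le_div_iff₀ (by positivity) hu0]
    nlinarith [hCu, hu0]
  have hCdivpos : 0 < C / u ^ 2 := by positivity
  have hX0 : 0 ≤ t * (1 - t) * A'' t := by
    have h1t : (0:ℝ) ≤ 1 - t := by linarith
    positivity
  have hteq : t ^ 2 * (1 - t) * A'' t = t * (t * (1 - t) * A'' t) := by ring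
  have ht2 : 0 ≤ t ^ 2 * (1 - t) * A'' t := by
    rw [hteq]; exact mul_nonneg (le_of_lt ht0) hX0
  have hmuprod0 : 0 ≤ μ * (1 - μ) := mul_nonneg hmu0 (by linarith)
  have hmuprod1 : μ * (1 - μ) ≤ 1 := mul_le_one₀ hmu1 (by linarith) (by linarith)
  have hmuprod2 : μ * (1 - μ) ≤ 2 * t := by
    have h := mul_le_mul_of_nonneg_right hmu1 (by linarith : (0:ℝ) ≤ 1 - μ)
    rw [one_mul] at h
    linarith
  have hB0 : 0 ≤ B := by
    rw [hBdef]
    have h2 : 0 ≤ t ^ 2 * (1 - t) * A'' t * (-Real.log u)⁻¹ := by positivity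
    linarith
  have hsec1 : t ^ 2 * (1 - t) * A'' t ≤ M := by
    rw [hteq]
    exact le_trans (mul_le_of_le_one_left hX0 (le_of_lt ht1)) hMt
  have hsec2 : t ^ 2 * (1 - t) * A'' t ≤ t * M := by
    rw [hteq]
    exact mul_le_mul_of_nonneg_left hMt (le_of_lt ht0)
  have hB1 : B ≤ 1 + M * (-Real.log u)⁻¹ := by
    rw [hBdef]
    have h2 : t ^ 2 * (1 - t) * A'' t * (-Real.log u)⁻¹ ≤ M * (-Real.log u)⁻¹ :=
      mul_le_mul_of_nonneg_right hsec1 (le_of_lt hLuinv)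
    linarith
  have hB2 : B ≤ 2 * t + t * M * (-Real.log u)⁻¹ := by
    rw [hBdef]
    have h2 : t ^ 2 * (1 - t) * A'' t * (-Real.log u)⁻¹ ≤ t * M * (-Real.log u)⁻¹ :=
      mul_le_mul_of_nonneg_right hsec2 (le_of_lt hLuinv)
    linarith
  refine ⟨by rw [hE]; positivity, ?_, ?_, ?_⟩
  · have h1u : (0:ℝ) < 1 - u := by linarith
    have hlul : 1 - u ≤ -Real.log u := by
      have := Real.log_le_sub_one_of_pos hu0
      linarith
    have hinv : (-Real.log u)⁻¹ ≤ (1 - u)⁻¹ := by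
      apply inv_anti₀ h1u hlul
    have hBle : B ≤ 1 + M * (1 - u)⁻¹ := by
      have h := mul_le_mul_of_nonneg_left hinv hM0
      linarith
    calc -evSecondUU A A' A'' u v = C / u ^ 2 * B := hE
      _ ≤ (1 / u) * (1 + M * (1 - u)⁻¹) := by
          apply mul_le_mul hCdivu hBle hB0 (by positivity)
      _ = (1 - u + M) / (u * (1 - u)) := by
          field_simp
      _ ≤ (1 + M) / (u * (1 - u)) := by
          rw [div_le_div_iff_of_pos_right (by positivity : (0:ℝ) < u * (1 - u))]
          linarith
  · rw [hE]
    exact mul_le_mul_of_nonneg_left hB1 (le_of_lt hCdivpos)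
  · calc -evSecondUU A A' A'' u v = C / u ^ 2 * B := hE
      _ ≤ (1 / u) * (2 * t + t * M * (-Real.log u)⁻¹) :=
          mul_le_mul hCdivu hB2 hB0 (by positivity)
      _ = t * ((2 + M * (-Real.log u)⁻¹) / u) := by ring

lemma key_bounds' (hconv : ConvexOn ℝ (Icc (0 : ℝ) 1) A)
    (hbounds : ∀ t ∈ Icc (0 : ℝ) 1, max t (1 - t) ≤ A t ∧ A t ≤ 1)
    (hA' : ∀ t ∈ Ioo (0 : ℝ) 1, HasDerivAt A (A' t) t)
    (hA'' : ∀ t ∈ Ioo (0 : ℝ) 1, HasDerivAt A' (A'' t) t)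
    (hM : ∀ t ∈ Ioo (0 : ℝ) 1, t * (1 - t) * A'' t ≤ M)
    (hu : u ∈ Ioo (0:ℝ) 1) (hv : v ∈ Ioo (0:ℝ) 1) :
    0 ≤ -evSecondUU A A' A'' u v ∧
    -evSecondUU A A' A'' u v ≤ (1 + M) / (u * (1 - u)) ∧
    -evSecondUU A A' A'' u v ≤
      evCopula2 A u v / u ^ 2 * (1 + M * (-Real.log u)⁻¹) ∧
    -evSecondUU A A' A'' u v ≤
      pickT u v * ((2 + M * (-Real.log u)⁻¹) / u) := by
  obtain ⟨hLneg, htI⟩ := pick_basic hu hv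
  obtain ⟨hmu0, hmu1, hmu2⟩ := mu_bounds hconv hbounds hA' htI
  have hApp := App_nonneg hconv hA' hA'' htI
  have hMt := hM _ htI
  have hM0 : 0 ≤ M := by
    have h := hM (1/2) (by norm_num)
    have h2 := App_nonneg hconv hA' hA'' (by norm_num : (1/2:ℝ) ∈ Ioo (0:ℝ) 1)
    norm_num at h
    linarith
  have hAt : 1 - pickT u v ≤ A (Real.log v / Real.log (u * v)) :=
    le_trans (le_max_right _ _) ((hbounds _ (Ioo_subset_Icc_self htI)).1)
  exact key_bounds htI hmu0 hmu1 hmu2 hApp hMt hM0 hAt hu hv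

lemma C_exp_bound
    (hbounds : ∀ t ∈ Icc (0 : ℝ) 1, max t (1 - t) ≤ A t ∧ A t ≤ 1)
    (hu : u ∈ Ioo (0:ℝ) 1) (hv : v ∈ Ioo (0:ℝ) 1) :
    evCopula2 A u v ≤ Real.exp ((Real.log u + Real.log v) / 2) := by
  obtain ⟨hLneg, htI⟩ := pick_basic hu hv
  have hL : Real.log (u * v) = Real.log u + Real.log v :=
    Real.log_mul (ne_of_gt hu.1) (ne_of_gt hv.1)
  have hAt : (1:ℝ)/2 ≤ A (Real.log v / Real.log (u * v)) := by
    refine le_trans ?_ ((hbounds _ (Ioo_subset_Icc_self htI)).1)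
    rcases le_total (pickT u v) (1/2) with h | h
    · exact le_trans (by rw [pickT] at h ⊢; linarith) (le_max_right _ _)
    · exact le_trans (by rw [pickT] at h ⊢; linarith) (le_max_left _ _)
  rw [evCopula2, Real.exp_le_exp]
  calc Real.log (u * v) * A (Real.log v / Real.log (u * v))
      ≤ Real.log (u * v) * (1/2) := mul_le_mul_of_nonpos_left hAt (le_of_lt hLneg)
    _ = (Real.log u + Real.log v) / 2 := by rw [hL]; ring

end Aux

/-- **Second derivative in `u` of a bivariate extreme-value copula.** If `A` is twice
continuously differentiable on `(0,1)` with `t(1−t)A″(t) ≤ M` on `(0,1)`, then on `(0,1)²`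
the derivative `∂²C/∂u²` exists, equals
`(C(u,v)/u²)(−μ(t)(1−μ(t)) + t²(1−t)A″(t)/log u)`, satisfies
`0 ≤ −∂²C/∂u² ≤ (1+M)/(u(1−u))`, and for each fixed `u` tends to `0` as `v ↓ 0` and as
`v ↑ 1`. -/
theorem evCopula2_second_deriv_uu
    (A A' A'' : ℝ → ℝ)
    -- A is a Pickands dependence function
    (hconv : ConvexOn ℝ (Icc (0 : ℝ) 1) A)
    (hbounds : ∀ t ∈ Icc (0 : ℝ) 1, max t (1 - t) ≤ A t ∧ A t ≤ 1)
    -- A is twice continuously differentiable on (0,1)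
    (hA' : ∀ t ∈ Ioo (0 : ℝ) 1, HasDerivAt A (A' t) t)
    (hA'' : ∀ t ∈ Ioo (0 : ℝ) 1, HasDerivAt A' (A'' t) t)
    (hA''cont : ContinuousOn A'' (Ioo (0 : ℝ) 1))
    -- M = sup_{0<t<1} t(1−t)A″(t) < ∞
    (M : ℝ) (hM : ∀ t ∈ Ioo (0 : ℝ) 1, t * (1 - t) * A'' t ≤ M) :
    ∃ D : ℝ → ℝ → ℝ,
      (∀ u ∈ Ioo (0 : ℝ) 1, ∀ v ∈ Ioo (0 : ℝ) 1,
        HasDerivAt (fun x : ℝ => evCopula2 A x v) (D u v) u ∧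
        HasDerivAt (fun x : ℝ => D x v) (evSecondUU A A' A'' u v) u ∧
        0 ≤ -evSecondUU A A' A'' u v ∧
        -evSecondUU A A' A'' u v ≤ (1 + M) / (u * (1 - u))) ∧
      (∀ u ∈ Ioo (0 : ℝ) 1,
        Tendsto (fun v : ℝ => evSecondUU A A' A'' u v) (𝓝[>] 0) (𝓝 0) ∧
        Tendsto (fun v : ℝ => evSecondUU A A' A'' u v) (𝓝[<] 1) (𝓝 0)) := by
  refine ⟨fun u v => evCopula2 A u v * pickMu A A' (pickT u v) / u, ?_, ?_⟩
  · intro u hu v hv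
    obtain ⟨h0, h1, _, _⟩ := key_bounds' hconv hbounds hA' hA'' hM hu hv
    exact ⟨first_deriv hA' hu hv, second_deriv hA' hA'' hu hv, h0, h1⟩
  · intro u hu
    have hu0 : 0 < u := hu.1
    have hu1 : u < 1 := hu.2
    have hLu : Real.log u < 0 := Real.log_neg hu0 hu1
    constructor
    · -- v → 0⁺
      set K1 : ℝ := (1 + M * (-Real.log u)⁻¹) / u ^ 2 with hK1
      -- C(u,v) → 0
      have h1 : Tendsto (fun v : ℝ => Real.log v) (𝓝[>] (0:ℝ)) atBot :=
        Real.tendsto_log_nhdsGT_zero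
      have h2 : Tendsto (fun v : ℝ => (Real.log u + Real.log v) / 2)
          (𝓝[>] (0:ℝ)) atBot := by
        apply Tendsto.atBot_div_const (by norm_num : (0:ℝ) < 2)
        exact tendsto_atBot_add_const_left _ _ h1
      have h3 : Tendsto (fun v : ℝ => Real.exp ((Real.log u + Real.log v) / 2))
          (𝓝[>] (0:ℝ)) (𝓝 0) := Real.tendsto_exp_atBot.comp h2
      have hCt : Tendsto (fun v : ℝ => evCopula2 A u v) (𝓝[>] (0:ℝ)) (𝓝 0) := by
        refine tendsto_of_tendsto_of_tendsto_of_le_of_le' tendsto_const_nhds h3 ?_ ?_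
        · filter_upwards with v
          exact le_of_lt (Real.exp_pos _)
        · filter_upwards [Ioo_mem_nhdsGT_of_mem
            (by constructor <;> norm_num : (0:ℝ) ∈ Ico (0:ℝ) 1)] with v hv
          exact C_exp_bound hbounds hu hv
      have hg : Tendsto (fun v : ℝ => evCopula2 A u v * K1) (𝓝[>] (0:ℝ)) (𝓝 0) := by
        simpa using hCt.mul_const K1
      refine tendsto_of_tendsto_of_tendsto_of_le_of_le'
        (by simpa using hg.neg) tendsto_const_nhds ?_ ?_
      · filter_upwards [Ioo_mem_nhdsGT_of_mem
          (by constructor <;> norm_num : (0:ℝ) ∈ Ico (0:ℝ) 1)] with v hv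
        obtain ⟨_, _, h3', _⟩ := key_bounds' hconv hbounds hA' hA'' hM hu hv
        have : evCopula2 A u v / u ^ 2 * (1 + M * (-Real.log u)⁻¹)
            = evCopula2 A u v * K1 := by rw [hK1]; ring
        linarith [h3', this.symm.le]
      · filter_upwards [Ioo_mem_nhdsGT_of_mem
          (by constructor <;> norm_num : (0:ℝ) ∈ Ico (0:ℝ) 1)] with v hv
        obtain ⟨h0', _, _, _⟩ := key_bounds' hconv hbounds hA' hA'' hM hu hv
        linarith
    · -- v → 1⁻
      set K2 : ℝ := (2 + M * (-Real.log u)⁻¹) / u with hK2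
      have hune : u * 1 ≠ 0 := by simp [hu0.ne']
      have hlogune : Real.log (u * 1) ≠ 0 := by
        rw [mul_one]; exact ne_of_lt hLu
      have c1 : ContinuousAt (fun v : ℝ => Real.log v) 1 :=
        Real.continuousAt_log (by norm_num)
      have c2 : ContinuousAt (fun v : ℝ => Real.log (u * v)) 1 := by
        apply ContinuousAt.comp (Real.continuousAt_log hune)
        exact (continuous_const.mul continuous_id).continuousAt
      have hTt : Tendsto (fun v : ℝ => pickT u v) (𝓝[<] (1:ℝ)) (𝓝 0) := by
        have := (c1.div c2 hlogune).tendsto.mono_left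
          (nhdsWithin_le_nhds : 𝓝[<] (1:ℝ) ≤ 𝓝 1)
        simpa [pickT, Real.log_one, Pi.div_def] using this
      have hg : Tendsto (fun v : ℝ => pickT u v * K2) (𝓝[<] (1:ℝ)) (𝓝 0) := by
        simpa using hTt.mul_const K2
      refine tendsto_of_tendsto_of_tendsto_of_le_of_le'
        (by simpa using hg.neg) tendsto_const_nhds ?_ ?_
      · filter_upwards [Ioo_mem_nhdsLT_of_mem
          (by constructor <;> norm_num : (1:ℝ) ∈ Ioc (0:ℝ) 1)] with v hv
        obtain ⟨_, _, _, h4'⟩ := key_bounds' hconv hbounds hA' hA'' hM hu hv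
        have : pickT u v * ((2 + M * (-Real.log u)⁻¹) / u) = pickT u v * K2 := by
          rw [hK2]
        linarith [h4', this.symm.le]
      · filter_upwards [Ioo_mem_nhdsLT_of_mem
          (by constructor <;> norm_num : (1:ℝ) ∈ Ioc (0:ℝ) 1)] with v hv
        obtain ⟨h0', _, _, _⟩ := key_bounds' hconv hbounds hA' hA'' hM hu hv
        linarith

end
end

section
/- For θ ∈ (0,1], let A_θ(t) = ( t^{1/θ} + (1−t)^{1/θ} )^{θ} for t ∈ [0,1] be the Pickands dependence function of the Gumbel extreme-value copula. Then A_θ is twice continuously differentiable on (0,1) and sup_{0<t<1} t(1−t) A_θ″(t) < ∞ (even though, for 1/2 < θ < 1, A_θ″(t) → ∞ as t → 0 and as t → 1). -/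
open Set Filter
open scoped Topology

noncomputable section

/-- The Pickands dependence function of the Gumbel extreme-value copula,
`A_θ(t) = (t^{1/θ} + (1−t)^{1/θ})^θ`. -/
def gumbelA (θ : ℝ) (t : ℝ) : ℝ :=
  (t ^ (1 / θ) + (1 - t) ^ (1 / θ)) ^ θ

namespace GumbelAux

open Real

/-- `S θ t = t^{1/θ} + (1-t)^{1/θ}`. -/
def S (θ t : ℝ) : ℝ := t ^ (1/θ) + (1 - t) ^ (1/θ)

/-- First derivative of `S θ`. -/
def S1 (θ t : ℝ) : ℝ := (1/θ) * t ^ (1/θ - 1) - (1/θ) * (1 - t) ^ (1/θ - 1)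

/-- Second derivative of `S θ`. -/
def S2 (θ t : ℝ) : ℝ :=
  (1/θ) * (1/θ - 1) * t ^ (1/θ - 2) + (1/θ) * (1/θ - 1) * (1 - t) ^ (1/θ - 2)

/-- First derivative of `gumbelA θ`. -/
def A1 (θ t : ℝ) : ℝ := S1 θ t * θ * S θ t ^ (θ - 1)

/-- Second derivative of `gumbelA θ`. -/
def A2 (θ t : ℝ) : ℝ :=
  S2 θ t * θ * S θ t ^ (θ - 1) + S1 θ t * θ * (S1 θ t * (θ - 1) * S θ t ^ (θ - 2))

variable {θ t : ℝ}

lemma S_pos (ht : t ∈ Ioo (0:ℝ) 1) : 0 < S θ t :=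
  add_pos (rpow_pos_of_pos ht.1 _) (rpow_pos_of_pos (by linarith [ht.2]) _)

lemma S_le_one (hθ0 : 0 < θ) (hθ1 : θ ≤ 1) (ht : t ∈ Ioo (0:ℝ) 1) : S θ t ≤ 1 := by
  obtain ⟨ht0, ht1⟩ := ht
  have h1t : (0:ℝ) < 1 - t := by linarith
  have hp1 : (1:ℝ) ≤ 1/θ := one_le_one_div hθ0 hθ1
  have h1 : t ^ (1/θ) ≤ t := by
    have := rpow_le_rpow_of_exponent_ge ht0 ht1.le hp1
    rwa [rpow_one] at this
  have h2 : (1-t) ^ (1/θ) ≤ 1 - t := by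
    have := rpow_le_rpow_of_exponent_ge h1t (by linarith) hp1
    rwa [rpow_one] at this
  simp only [S]; linarith

lemma S_ge (hθ0 : 0 < θ) (ht : t ∈ Ioo (0:ℝ) 1) : ((1:ℝ)/2) ^ (1/θ) ≤ S θ t := by
  obtain ⟨ht0, ht1⟩ := ht
  have h1t : (0:ℝ) < 1 - t := by linarith
  rcases le_total t (1/2) with h | h
  · have : ((1:ℝ)/2) ^ (1/θ) ≤ (1-t) ^ (1/θ) :=
      rpow_le_rpow (by norm_num) (by linarith) (by positivity)
    have h0 : 0 < t ^ (1/θ) := rpow_pos_of_pos ht0 _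
    simp only [S]; linarith
  · have : ((1:ℝ)/2) ^ (1/θ) ≤ t ^ (1/θ) :=
      rpow_le_rpow (by norm_num) h (by positivity)
    have h0 : 0 < (1-t) ^ (1/θ) := rpow_pos_of_pos h1t _
    simp only [S]; linarith

lemma hasDerivAt_S (ht : t ∈ Ioo (0:ℝ) 1) : HasDerivAt (S θ) (S1 θ t) t := by
  obtain ⟨ht0, ht1⟩ := ht
  have h1 : HasDerivAt (fun y : ℝ => y ^ (1/θ)) ((1/θ) * t ^ (1/θ - 1)) t :=
    Real.hasDerivAt_rpow_const (Or.inl ht0.ne')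
  have h2 : HasDerivAt (fun y : ℝ => (1 - y) ^ (1/θ)) ((-1) * (1/θ) * (1-t) ^ (1/θ - 1)) t :=
    ((hasDerivAt_id t).const_sub 1).rpow_const (Or.inl (by linarith : (0:ℝ) < 1 - t).ne')
  have := h1.add h2
  refine HasDerivAt.congr_deriv this ?_
  simp only [S1]; ring

lemma hasDerivAt_A (ht : t ∈ Ioo (0:ℝ) 1) :
    HasDerivAt (gumbelA θ) (A1 θ t) t :=
  (hasDerivAt_S ht).rpow_const (Or.inl (S_pos ht).ne')

lemma hasDerivAt_S1 (ht : t ∈ Ioo (0:ℝ) 1) : HasDerivAt (S1 θ) (S2 θ t) t := by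
  obtain ⟨ht0, ht1⟩ := ht
  have h1 : HasDerivAt (fun y : ℝ => (1/θ) * y ^ (1/θ - 1))
      ((1/θ) * ((1/θ - 1) * t ^ (1/θ - 1 - 1))) t :=
    (Real.hasDerivAt_rpow_const (Or.inl ht0.ne')).const_mul _
  have h2 : HasDerivAt (fun y : ℝ => (1/θ) * (1 - y) ^ (1/θ - 1))
      ((1/θ) * ((-1) * (1/θ - 1) * (1-t) ^ (1/θ - 1 - 1))) t :=
    (((hasDerivAt_id t).const_sub 1).rpow_const
      (Or.inl (by linarith : (0:ℝ) < 1 - t).ne')).const_mul _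
  have e : 1/θ - 1 - 1 = 1/θ - 2 := by ring
  rw [e] at h1 h2
  have := h1.sub h2
  refine HasDerivAt.congr_deriv this ?_
  simp only [S2]; ring

lemma hasDerivAt_A1 (ht : t ∈ Ioo (0:ℝ) 1) :
    HasDerivAt (A1 θ) (A2 θ t) t := by
  have hS : HasDerivAt (S θ) (S1 θ t) t := hasDerivAt_S ht
  have hS1 : HasDerivAt (S1 θ) (S2 θ t) t := hasDerivAt_S1 ht
  have hpow : HasDerivAt (fun y => S θ y ^ (θ - 1)) (S1 θ t * (θ-1) * S θ t ^ (θ - 1 - 1)) t :=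
    hS.rpow_const (Or.inl (S_pos ht).ne')
  have e : θ - 1 - 1 = θ - 2 := by ring
  rw [e] at hpow
  exact (hS1.mul_const θ).mul hpow

lemma continuousOn_A2 : ContinuousOn (A2 θ) (Ioo (0:ℝ) 1) := by
  intro t ht
  apply ContinuousAt.continuousWithinAt
  obtain ⟨ht0, ht1⟩ := ht
  have h1t : (0:ℝ) < 1 - t := by linarith
  have c1 : ∀ c : ℝ, ContinuousAt (fun y : ℝ => y ^ c) t := fun c =>
    Real.continuousAt_rpow_const t c (Or.inl ht0.ne')
  have c2 : ∀ c : ℝ, ContinuousAt (fun y : ℝ => (1-y) ^ c) t := fun c =>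
    ContinuousAt.rpow_const (by fun_prop) (Or.inl h1t.ne')
  have cS : ContinuousAt (S θ) t := (c1 _).add (c2 _)
  have cS1 : ContinuousAt (S1 θ) t :=
    ((c1 _).const_mul _).sub ((c2 _).const_mul _)
  have cS2 : ContinuousAt (S2 θ) t :=
    ((c1 _).const_mul _).add ((c2 _).const_mul _)
  have hSne : S θ t ≠ 0 := (S_pos ⟨ht0, ht1⟩).ne'
  have cP1 : ContinuousAt (fun y => S θ y ^ (θ - 1)) t := cS.rpow_const (Or.inl hSne)
  have cP2 : ContinuousAt (fun y => S θ y ^ (θ - 2)) t := cS.rpow_const (Or.inl hSne)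
  exact ((cS2.mul continuousAt_const).mul cP1).add
    ((cS1.mul continuousAt_const).mul ((cS1.mul continuousAt_const).mul cP2))

lemma A2_symm : A2 θ (1 - t) = A2 θ t := by
  simp only [A2, S, S1, S2, sub_sub_cancel]
  ring

/-- Rewriting of `t·(1-t)·A2` in a convenient form. -/
lemma expand (hθ0 : 0 < θ) (ht0 : 0 < t) (ht1 : t < 1) :
    t * (1 - t) * A2 θ t
      = θ * (θ-1) * (S θ t ^ (θ-2) * S1 θ t ^ 2 * (t * (1-t)))
        + (1/θ - 1) * S θ t ^ (θ-1) *
            ((1-t) * t ^ (1/θ - 1) + t * (1-t) ^ (1/θ - 1)) := by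
  have h1t : (0:ℝ) < 1 - t := by linarith
  have e1 : t * t ^ (1/θ - 2) = t ^ (1/θ - 1) := by
    rw [show (1:ℝ)/θ - 1 = 1 + (1/θ - 2) by ring, Real.rpow_add ht0, Real.rpow_one]
  have e2 : (1-t) * (1-t) ^ (1/θ - 2) = (1-t) ^ (1/θ - 1) := by
    rw [show (1:ℝ)/θ - 1 = 1 + (1/θ - 2) by ring, Real.rpow_add h1t, Real.rpow_one]
  rw [← e1, ← e2]
  have hθne : θ ≠ 0 := hθ0.ne'
  simp only [A2, S2]
  field_simp
  ring

lemma bound (hθ0 : 0 < θ) (hθ1 : θ ≤ 1) (ht : t ∈ Ioo (0:ℝ) 1) :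
    t * (1 - t) * A2 θ t ≤ (1/θ - 1) * (((1:ℝ)/2) ^ (1/θ)) ^ (θ-1) * 2 := by
  obtain ⟨ht0, ht1⟩ := ht
  have h1t : (0:ℝ) < 1 - t := by linarith
  rw [expand hθ0 ht0 ht1]
  have hfirst : θ * (θ-1) * (S θ t ^ (θ-2) * S1 θ t ^ 2 * (t * (1-t))) ≤ 0 := by
    apply mul_nonpos_of_nonpos_of_nonneg
    · exact mul_nonpos_of_nonneg_of_nonpos hθ0.le (by linarith)
    · have : 0 ≤ S θ t ^ (θ-2) := (rpow_pos_of_pos (S_pos ⟨ht0, ht1⟩) _).le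
      positivity
  have hSb : S θ t ^ (θ-1) ≤ (((1:ℝ)/2) ^ (1/θ)) ^ (θ-1) :=
    rpow_le_rpow_of_nonpos (rpow_pos_of_pos (by norm_num) _) (S_ge hθ0 ⟨ht0, ht1⟩)
      (by linarith)
  have hB : (1-t) * t ^ (1/θ - 1) + t * (1-t) ^ (1/θ - 1) ≤ 2 := by
    have hp : (0:ℝ) ≤ 1/θ - 1 := by
      have := one_le_one_div hθ0 hθ1; linarith
    have h1 : t ^ (1/θ - 1) ≤ 1 := rpow_le_one ht0.le ht1.le hp
    have h2 : (1-t) ^ (1/θ - 1) ≤ 1 := rpow_le_one h1t.le (by linarith) hp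
    have h3 : 0 ≤ t ^ (1/θ - 1) := (rpow_pos_of_pos ht0 _).le
    have h4 : 0 ≤ (1-t) ^ (1/θ - 1) := (rpow_pos_of_pos h1t _).le
    nlinarith
  have hp : (0:ℝ) ≤ 1/θ - 1 := by
    have := one_le_one_div hθ0 hθ1; linarith
  have hS1b : 0 ≤ S θ t ^ (θ-1) := (rpow_pos_of_pos (S_pos ⟨ht0, ht1⟩) _).le
  have hBnn : 0 ≤ (1-t) * t ^ (1/θ - 1) + t * (1-t) ^ (1/θ - 1) := by
    have h3 : 0 ≤ t ^ (1/θ - 1) := (rpow_pos_of_pos ht0 _).le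
    have h4 : 0 ≤ (1-t) ^ (1/θ - 1) := (rpow_pos_of_pos h1t _).le
    nlinarith
  have hsecond : (1/θ - 1) * S θ t ^ (θ-1) *
      ((1-t) * t ^ (1/θ - 1) + t * (1-t) ^ (1/θ - 1))
      ≤ (1/θ - 1) * (((1:ℝ)/2) ^ (1/θ)) ^ (θ-1) * 2 := by
    gcongr
  linarith

/-- Lower bound for `A2` used to show the blow-up at the endpoints. -/
lemma lower (hθ0 : 0 < θ) (hθ1 : θ ≤ 1) (ht : t ∈ Ioo (0:ℝ) 1) :
    (1/θ - 1) * t ^ (1/θ - 2)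
      + θ * (θ-1) * ((((1:ℝ)/2) ^ (1/θ)) ^ (θ-2) * (1/θ)^2) ≤ A2 θ t := by
  obtain ⟨ht0, ht1⟩ := ht
  have h1t : (0:ℝ) < 1 - t := by linarith
  have hp : (0:ℝ) ≤ 1/θ - 1 := by
    have := one_le_one_div hθ0 hθ1; linarith
  have hX : 0 ≤ t ^ (1/θ - 2) := (rpow_pos_of_pos ht0 _).le
  have hY : 0 ≤ (1-t) ^ (1/θ - 2) := (rpow_pos_of_pos h1t _).le
  -- first summand of A2
  have hT1 : (1/θ - 1) * t ^ (1/θ - 2) ≤ S2 θ t * θ * S θ t ^ (θ-1) := by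
    have hrw : S2 θ t * θ = (1/θ - 1) * (t ^ (1/θ - 2) + (1-t) ^ (1/θ - 2)) := by
      have hθne : θ ≠ 0 := hθ0.ne'
      simp only [S2]; field_simp
    rw [hrw]
    have h1 : 1 ≤ S θ t ^ (θ-1) :=
      one_le_rpow_of_pos_of_le_one_of_nonpos (S_pos ⟨ht0, ht1⟩)
        (S_le_one hθ0 hθ1 ⟨ht0, ht1⟩) (by linarith)
    nlinarith [mul_nonneg (mul_nonneg hp (add_nonneg hX hY)) (sub_nonneg.2 h1),
      mul_nonneg hp hY]
  -- second summand of A2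
  have hT2 : θ * (θ-1) * ((((1:ℝ)/2) ^ (1/θ)) ^ (θ-2) * (1/θ)^2)
      ≤ S1 θ t * θ * (S1 θ t * (θ-1) * S θ t ^ (θ-2)) := by
    have hS1sq : S1 θ t ^ 2 ≤ (1/θ)^2 := by
      have ha0 : 0 ≤ t ^ (1/θ - 1) := (rpow_pos_of_pos ht0 _).le
      have ha1 : t ^ (1/θ - 1) ≤ 1 := rpow_le_one ht0.le ht1.le hp
      have hb0 : 0 ≤ (1-t) ^ (1/θ - 1) := (rpow_pos_of_pos h1t _).le
      have hb1 : (1-t) ^ (1/θ - 1) ≤ 1 := rpow_le_one h1t.le (by linarith) hp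
      have haux : (t ^ (1/θ - 1) - (1-t) ^ (1/θ - 1))^2 ≤ 1 := by
        nlinarith [mul_nonneg (sub_nonneg.2 ha1) (sub_nonneg.2 hb1),
          mul_nonneg ha0 hb0, mul_nonneg (sub_nonneg.2 ha1) ha0,
          mul_nonneg (sub_nonneg.2 hb1) hb0]
      have e : S1 θ t ^ 2 = (1/θ)^2 * (t ^ (1/θ - 1) - (1-t) ^ (1/θ - 1))^2 := by
        simp only [S1]; ring
      calc S1 θ t ^ 2 = (1/θ)^2 * (t ^ (1/θ - 1) - (1-t) ^ (1/θ - 1))^2 := e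
        _ ≤ (1/θ)^2 * 1 := by gcongr
        _ = (1/θ)^2 := mul_one _
    have hZpos : 0 < S θ t ^ (θ-2) := rpow_pos_of_pos (S_pos ⟨ht0, ht1⟩) _
    have hZb : S θ t ^ (θ-2) ≤ (((1:ℝ)/2) ^ (1/θ)) ^ (θ-2) :=
      rpow_le_rpow_of_nonpos (rpow_pos_of_pos (by norm_num) _)
        (S_ge hθ0 ⟨ht0, ht1⟩) (by linarith)
    have hrw : S1 θ t * θ * (S1 θ t * (θ-1) * S θ t ^ (θ-2))
        = θ * (θ-1) * (S θ t ^ (θ-2) * S1 θ t ^ 2) := by ring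
    rw [hrw]
    have hq : S θ t ^ (θ-2) * S1 θ t ^ 2 ≤ (((1:ℝ)/2) ^ (1/θ)) ^ (θ-2) * (1/θ)^2 :=
      mul_le_mul hZb hS1sq (sq_nonneg _) (by positivity)
    have hnp : θ * (θ-1) ≤ 0 := mul_nonpos_of_nonneg_of_nonpos hθ0.le (by linarith)
    exact mul_le_mul_of_nonpos_left hq hnp
  simp only [A2]
  linarith

/-- Same lower bound in terms of `1 - t`. -/
lemma lower' (hθ0 : 0 < θ) (hθ1 : θ ≤ 1) (ht : t ∈ Ioo (0:ℝ) 1) :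
    (1/θ - 1) * (1-t) ^ (1/θ - 2)
      + θ * (θ-1) * ((((1:ℝ)/2) ^ (1/θ)) ^ (θ-2) * (1/θ)^2) ≤ A2 θ t := by
  have h : (1 - t) ∈ Ioo (0:ℝ) 1 := ⟨by linarith [ht.2], by linarith [ht.1]⟩
  have := lower hθ0 hθ1 h
  rwa [A2_symm] at this

lemma tendsto_rpow_zero_right (c : ℝ) (hc : c < 0) :
    Tendsto (fun t : ℝ => t ^ c) (𝓝[>] (0:ℝ)) atTop := by
  have key : Tendsto (fun t : ℝ => t ^ (-c)) (𝓝[>] (0:ℝ)) (𝓝[>] (0:ℝ)) := by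
    apply tendsto_nhdsWithin_of_tendsto_nhds_of_eventually_within
    · have hcont := (Real.continuousAt_rpow_const 0 (-c) (Or.inr (by linarith))).tendsto
      rw [Real.zero_rpow (by linarith : -c ≠ 0)] at hcont
      exact hcont.mono_left nhdsWithin_le_nhds
    · filter_upwards [self_mem_nhdsWithin] with t ht
      exact rpow_pos_of_pos ht _
  have := key.inv_tendsto_nhdsGT_zero
  refine this.congr' ?_
  filter_upwards [self_mem_nhdsWithin] with t (ht : t ∈ Ioi (0:ℝ))
  simp only [Pi.inv_apply]
  rw [← Real.rpow_neg (le_of_lt ht), neg_neg]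

end GumbelAux

open GumbelAux

/-- **Gumbel dependence function.** For `θ ∈ (0,1]`, `A_θ` is twice continuously
differentiable on `(0,1)` and `sup_{0<t<1} t(1−t)A_θ″(t) < ∞`, even though for
`1/2 < θ < 1` one has `A_θ″(t) → ∞` as `t → 0` and as `t → 1`. -/
theorem gumbelA_second_deriv_growth
    (θ : ℝ) (hθ : θ ∈ Ioc (0 : ℝ) 1) :
    ∃ A' A'' : ℝ → ℝ,
      (∀ t ∈ Ioo (0 : ℝ) 1, HasDerivAt (gumbelA θ) (A' t) t) ∧
      (∀ t ∈ Ioo (0 : ℝ) 1, HasDerivAt A' (A'' t) t) ∧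
      ContinuousOn A' (Ioo (0 : ℝ) 1) ∧
      ContinuousOn A'' (Ioo (0 : ℝ) 1) ∧
      (∃ M : ℝ, ∀ t ∈ Ioo (0 : ℝ) 1, t * (1 - t) * A'' t ≤ M) ∧
      (1 / 2 < θ → θ < 1 →
        Tendsto A'' (𝓝[>] (0 : ℝ)) atTop ∧ Tendsto A'' (𝓝[<] (1 : ℝ)) atTop) := by
  obtain ⟨hθ0, hθ1⟩ := hθ
  refine ⟨A1 θ, A2 θ, fun t ht => hasDerivAt_A ht, fun t ht => hasDerivAt_A1 ht,
    fun t ht => ((hasDerivAt_A1 ht).continuousAt).continuousWithinAt,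
    continuousOn_A2, ⟨_, fun t ht => bound hθ0 hθ1 ht⟩, fun hhalf hlt => ?_⟩
  set c : ℝ := θ * (θ-1) * ((((1:ℝ)/2) ^ (1/θ)) ^ (θ-2) * (1/θ)^2) with hc
  have hpm : (0:ℝ) < 1/θ - 1 := by
    have : 1 < 1/θ := one_lt_one_div hθ0 hlt
    linarith
  have hexp : 1/θ - 2 < 0 := by
    have : 1/θ < 2 := by
      rw [div_lt_iff₀ hθ0]; linarith
    linarith
  have hmain : Tendsto (fun t : ℝ => (1/θ - 1) * t ^ (1/θ - 2) + c) (𝓝[>] (0:ℝ)) atTop :=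
    tendsto_atTop_add_const_right _ c
      ((tendsto_rpow_zero_right _ hexp).const_mul_atTop hpm)
  constructor
  · apply tendsto_atTop_mono' _ ?_ hmain
    filter_upwards [Ioo_mem_nhdsGT (by norm_num : (0:ℝ) < 1)] with t ht
    exact lower hθ0 hθ1 ht
  · have hmap : Tendsto (fun t : ℝ => 1 - t) (𝓝[<] (1:ℝ)) (𝓝[>] (0:ℝ)) := by
      apply tendsto_nhdsWithin_of_tendsto_nhds_of_eventually_within
      · have h : Tendsto (fun t : ℝ => 1 - t) (𝓝 (1:ℝ)) (𝓝 ((1:ℝ) - 1)) :=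
          tendsto_const_nhds.sub tendsto_id
        rw [sub_self] at h
        exact h.mono_left nhdsWithin_le_nhds
      · filter_upwards [self_mem_nhdsWithin] with t (ht : t ∈ Iio (1:ℝ))
        simpa using ht
    have hmain' : Tendsto (fun t : ℝ => (1/θ - 1) * (1-t) ^ (1/θ - 2) + c)
        (𝓝[<] (1:ℝ)) atTop := hmain.comp hmap
    apply tendsto_atTop_mono' _ ?_ hmain'
    filter_upwards [Ioo_mem_nhdsLT (by norm_num : (0:ℝ) < 1)] with t ht
    exact lower' hθ0 hθ1 ht
end
end
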